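/- arXiv:1304.5667 — 8 statements merged into one kernel-verified Lean document; each statement's English description precedes it below -/
import Mathlib

section
/- Let w ∈ S_n be a permutation that contains no factor (consecutive subsequence of three letters) whose order pattern is 132 or 231. If the last letter of w is smaller than the second-to-last letter, then w is the decreasing permutation n(n-1)...1. -/
/-- A pattern of length 3, given as a relation on the three letter values. -/
abbrev Pat : Type := ℕ → ℕ → ℕ → Prop

def p123 : Pat := fun a b c => a < b ∧ b < c
def p132 : Pat := fun a b c => a < c ∧ c < b
def p213 : Pat := fun a b c => b < a ∧ a < c
def p231 : Pat := fun a b c => c < a ∧ a < b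
def p312 : Pat := fun a b c => b < c ∧ c < a
def p321 : Pat := fun a b c => c < b ∧ b < a

/-- The factor of `w` at positions `i, i+1, i+2` has order pattern `p`. -/
def PatAt {n : ℕ} (w : Equiv.Perm (Fin n)) (i : ℕ) (h : i + 3 ≤ n) (p : Pat) : Prop :=
  p (w ⟨i, by omega⟩).val (w ⟨i + 1, by omega⟩).val (w ⟨i + 2, by omega⟩).val

/-- One replacement move: a factor of three adjacent letters whose pattern lies in some
part `Q` of the replacement partition is rearranged (same letters, all other positions
unchanged) into a factor whose pattern also lies in `Q`. -/
def Step3 {n : ℕ} (parts : Set (Set Pat)) (w w' : Equiv.Perm (Fin n)) : Prop :=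
  ∃ Q ∈ parts, ∃ i : ℕ, ∃ h : i + 3 ≤ n,
    (∀ j : Fin n, (j.val < i ∨ i + 3 ≤ j.val) → w j = w' j) ∧
    (∃ p ∈ Q, PatAt w i h p) ∧ (∃ q ∈ Q, PatAt w' i h q)

/-- The equivalence relation on `S_n` generated by the replacement moves. -/
def PattEquiv {n : ℕ} (parts : Set (Set Pat)) :
    Equiv.Perm (Fin n) → Equiv.Perm (Fin n) → Prop :=
  Relation.EqvGen (Step3 parts)

/-- The number of equivalence classes of `S_n` under the given replacement partition. -/
noncomputable def classCount (n : ℕ) (parts : Set (Set Pat)) : ℕ :=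
  Nat.card (Quotient (Setoid.mk (PattEquiv (n := n) parts)
    (Relation.EqvGen.is_equivalence _)))

/-- `w` avoids every pattern in `P` as a consecutive pattern. -/
def AvoidsAll {n : ℕ} (w : Equiv.Perm (Fin n)) (P : Set Pat) : Prop :=
  ∀ (i : ℕ) (h : i + 3 ≤ n), ∀ p ∈ P, ¬ PatAt w i h p

/-- A V-permutation: the letters strictly decrease until the letter `1`
(the smallest value, `0` in `Fin n`) and then strictly increase. -/
def IsVPerm {n : ℕ} (w : Equiv.Perm (Fin n)) : Prop :=
  ∃ i : Fin n, w i = ⟨0, i.pos⟩ ∧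
    (∀ j k : Fin n, j < k → k ≤ i → w k < w j) ∧
    (∀ j k : Fin n, i ≤ j → j < k → w j < w k)

/-- Motzkin path: steps U=1, F=0, D=-1, partial sums nonnegative, total sum 0. -/
def IsMotzkinPath (l : List ℤ) : Prop :=
  (∀ x ∈ l, x = 1 ∨ x = 0 ∨ x = -1) ∧ (∀ k : ℕ, 0 ≤ (l.take k).sum) ∧ l.sum = 0

/-- The `n`-th Motzkin number: the number of Motzkin paths of length `n`. -/
noncomputable def motzkin (n : ℕ) : ℕ :=
  Nat.card {l : List ℤ // l.length = n ∧ IsMotzkinPath l}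


/-- a permutation avoiding the consecutive patterns 132 and 231 whose last
letter is smaller than its second-to-last letter is the decreasing permutation. -/
theorem stmt1 (n : ℕ) (hn : 2 ≤ n) (w : Equiv.Perm (Fin n))
    (hav : AvoidsAll w {p132, p231})
    (hlast : w ⟨n - 1, by omega⟩ < w ⟨n - 2, by omega⟩) :
    ∀ j : Fin n, (w j).val = n - 1 - j.val := by
  -- adjacent descents everywhere, by downward induction from the end
  have adj : ∀ m : ℕ, ∀ i : ℕ, ∀ h : i + 2 ≤ n, n - 2 - i = m →
      w ⟨i + 1, by omega⟩ < w ⟨i, by omega⟩ := by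
    intro m
    induction m with
    | zero =>
      intro i h hm
      have h1 : i = n - 2 := by omega
      subst h1
      have e1 : (⟨n - 2 + 1, by omega⟩ : Fin n) = ⟨n - 1, by omega⟩ := by
        simp only [Fin.mk.injEq]; omega
      rw [e1]; exact hlast
    | succ m ih =>
      intro i h hm
      have h3 : i + 3 ≤ n := by omega
      have hnext : w ⟨i + 1 + 1, by omega⟩ < w ⟨i + 1, by omega⟩ :=
        ih (i + 1) (by omega) (by omega)
      by_contra hc
      have hne : w ⟨i, by omega⟩ ≠ w ⟨i + 1, by omega⟩ := by
        intro he
        have := w.injective he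
        simp [Fin.ext_iff] at this
      have hlt : w ⟨i, by omega⟩ < w ⟨i + 1, by omega⟩ :=
        lt_of_le_of_ne (not_lt.mp hc) hne
      have hne2 : w ⟨i, by omega⟩ ≠ w ⟨i + 2, by omega⟩ := by
        intro he
        have := w.injective he
        simp [Fin.ext_iff] at this
      rcases lt_or_gt_of_ne hne2 with hcase | hcase
      · exact hav i h3 p132 (by simp [Set.mem_insert_iff])
          ⟨hcase, by simpa using hnext⟩
      · exact hav i h3 p231 (by simp [Set.mem_insert_iff])
          ⟨hcase, hlt⟩
  have adj' : ∀ i : ℕ, ∀ h : i + 2 ≤ n, w ⟨i + 1, by omega⟩ < w ⟨i, by omega⟩ :=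
    fun i h => adj (n - 2 - i) i h rfl
  -- strictly decreasing
  have dec : ∀ j k : Fin n, j < k → w k < w j := by
    have key : ∀ d : ℕ, ∀ i : ℕ, ∀ h : i + d + 2 ≤ n,
        w ⟨i + d + 1, by omega⟩ < w ⟨i, by omega⟩ := by
      intro d
      induction d with
      | zero => intro i h; exact adj' i (by omega)
      | succ d ih =>
        intro i h
        have h1 : w ⟨(i + d + 1) + 1, by omega⟩ < w ⟨i + d + 1, by omega⟩ :=
          adj' (i + d + 1) (by omega)
        have h2 : w ⟨i + d + 1, by omega⟩ < w ⟨i, by omega⟩ := ih i (by omega)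
        have e : (⟨i + (d + 1) + 1, by omega⟩ : Fin n) = ⟨(i + d + 1) + 1, by omega⟩ := by
          simp only [Fin.mk.injEq]; omega
        rw [e]; exact lt_trans h1 h2
    intro j k hjk
    have hjk' : j.val < k.val := hjk
    have h := key (k.val - j.val - 1) j.val (by omega)
    have e1 : (⟨j.val + (k.val - j.val - 1) + 1, by omega⟩ : Fin n) = k :=
      Fin.ext (by simp; omega)
    have e2 : (⟨j.val, by omega⟩ : Fin n) = j := Fin.ext rfl
    rw [e1, e2] at h
    exact h
  intro j
  -- counting argument
  have h1 : (Finset.Ioi j).card ≤ (Finset.Iio (w j)).card := by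
    have : (Finset.Ioi j).image w ⊆ Finset.Iio (w j) := by
      intro x hx
      simp only [Finset.mem_image, Finset.mem_Ioi] at hx
      obtain ⟨k, hk, rfl⟩ := hx
      simpa using dec j k hk
    calc (Finset.Ioi j).card = ((Finset.Ioi j).image w).card :=
          (Finset.card_image_of_injective _ w.injective).symm
      _ ≤ (Finset.Iio (w j)).card := Finset.card_le_card this
  have h2 : (Finset.Iio j).card ≤ (Finset.Ioi (w j)).card := by
    have : (Finset.Iio j).image w ⊆ Finset.Ioi (w j) := by
      intro x hx
      simp only [Finset.mem_image, Finset.mem_Iio] at hx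
      obtain ⟨k, hk, rfl⟩ := hx
      simpa using dec k j hk
    calc (Finset.Iio j).card = ((Finset.Iio j).image w).card :=
          (Finset.card_image_of_injective _ w.injective).symm
      _ ≤ (Finset.Ioi (w j)).card := Finset.card_le_card this
  rw [Fin.card_Ioi, Fin.card_Iio] at h1
  rw [Fin.card_Iio, Fin.card_Ioi] at h2
  have := j.isLt
  have := (w j).isLt
  omega
end

section
/- For n > 3, the number g(n) of permutations in S_n avoiding the consecutive patterns 213, 132, and 231 satisfies g(n) = 2·g(n-1) - 1. Consequently, since g(3) = 3, we have g(n) = 2^(n-2) + 1 for all n ≥ 3. -/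
namespace Stmt2Aux
open Equiv

def pats : Set Pat := {p213, p132, p231}

def Good (a b c : ℕ) : Prop := (a < b ∧ b < c) ∨ (b < a ∧ c < a)

instance Good.dec (a b c : ℕ) : Decidable (Good a b c) := by unfold Good; infer_instance

/-- values of the permutation as a ℕ-valued sequence -/
def V {n : ℕ} (w : Perm (Fin n)) (i : ℕ) : ℕ := if h : i < n then (w ⟨i, h⟩).val else 0

lemma V_eq {n : ℕ} (w : Perm (Fin n)) {i : ℕ} (h : i < n) : V w i = (w ⟨i, h⟩).val :=
  dif_pos h

lemma V_lt {n : ℕ} (w : Perm (Fin n)) {i : ℕ} (h : i < n) : V w i < n := by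
  rw [V_eq w h]; exact (w ⟨i, h⟩).isLt

lemma V_inj {n : ℕ} (w : Perm (Fin n)) {i j : ℕ} (hi : i < n) (hj : j < n)
    (h : V w i = V w j) : i = j := by
  rw [V_eq w hi, V_eq w hj] at h
  have h2 := w.injective (Fin.ext h)
  exact congrArg Fin.val h2

lemma patAt_iff {n : ℕ} (w : Perm (Fin n)) (i : ℕ) (h : i + 3 ≤ n) (p : Pat) :
    PatAt w i h p ↔ p (V w i) (V w (i+1)) (V w (i+2)) := by
  rw [V_eq w (show i < n by omega), V_eq w (show i+1 < n by omega),
    V_eq w (show i+2 < n by omega)]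
  exact Iff.rfl

lemma avoid_iff {n : ℕ} (w : Perm (Fin n)) :
    AvoidsAll w pats ↔ ∀ i : ℕ, i + 3 ≤ n → Good (V w i) (V w (i+1)) (V w (i+2)) := by
  constructor
  · intro H i h
    have h1 := H i h p213 (by simp [pats])
    have h2 := H i h p132 (by simp [pats])
    have h3 := H i h p231 (by simp [pats])
    rw [patAt_iff] at h1 h2 h3
    have d1 : V w i ≠ V w (i+1) := fun e => by
      have := V_inj w (show i < n by omega) (show i+1 < n by omega) e; omega
    have d2 : V w (i+1) ≠ V w (i+2) := fun e => by
      have := V_inj w (show i+1 < n by omega) (show i+2 < n by omega) e; omega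
    have d3 : V w i ≠ V w (i+2) := fun e => by
      have := V_inj w (show i < n by omega) (show i+2 < n by omega) e; omega
    unfold p213 at h1; unfold p132 at h2; unfold p231 at h3
    unfold Good
    omega
  · intro H i h p hp
    have hG := H i h
    unfold Good at hG
    simp only [pats, Set.mem_insert_iff, Set.mem_singleton_iff] at hp
    rcases hp with rfl | rfl | rfl <;>
      (rw [patAt_iff]; first | unfold p213 | skip) <;>
      (first | unfold p132 | skip) <;> (first | unfold p231 | skip) <;> omega


/-- prepend the largest value at the front -/
noncomputable def prep {n : ℕ} (u : Perm (Fin n)) : Perm (Fin (n+1)) :=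
  Equiv.ofBijective (Fin.cons (Fin.last n) (fun i => (u i).castSucc))
    (Finite.injective_iff_bijective.mp (by
      intro a b hab
      cases a using Fin.cases with
      | zero =>
        cases b using Fin.cases with
        | zero => rfl
        | succ j =>
          rw [Fin.cons_zero, Fin.cons_succ] at hab
          exact absurd hab.symm (Fin.ne_of_lt (Fin.castSucc_lt_last _))
      | succ i =>
        cases b using Fin.cases with
        | zero =>
          rw [Fin.cons_zero, Fin.cons_succ] at hab
          exact absurd hab (Fin.ne_of_lt (Fin.castSucc_lt_last _))
        | succ j =>
          rw [Fin.cons_succ, Fin.cons_succ] at hab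
          exact congrArg Fin.succ (u.injective (Fin.castSucc_injective _ hab))))

lemma prep_apply {n : ℕ} (u : Perm (Fin n)) (a : Fin (n+1)) :
    prep u a = Fin.cons (α := fun _ => Fin (n+1)) (Fin.last n) (fun i => (u i).castSucc) a := rfl

lemma prep_zero {n : ℕ} (u : Perm (Fin n)) : prep u 0 = Fin.last n := by
  rw [prep_apply, Fin.cons_zero]

lemma prep_succ {n : ℕ} (u : Perm (Fin n)) (i : Fin n) :
    prep u i.succ = (u i).castSucc := by
  rw [prep_apply, Fin.cons_succ]

lemma V_prep_zero {n : ℕ} (u : Perm (Fin n)) : V (prep u) 0 = n := by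
  rw [V_eq (prep u) (show 0 < n + 1 by omega)]
  have h0 : (⟨0, show 0 < n + 1 by omega⟩ : Fin (n+1)) = 0 := rfl
  rw [h0, prep_zero, Fin.val_last]

lemma V_prep_succ {n : ℕ} (u : Perm (Fin n)) (i : ℕ) : V (prep u) (i+1) = V u i := by
  by_cases h : i < n
  · rw [V_eq (prep u) (show i+1 < n+1 by omega), V_eq u h]
    have h1 : (⟨i+1, show i+1 < n+1 by omega⟩ : Fin (n+1)) = Fin.succ ⟨i, h⟩ := rfl
    rw [h1, prep_succ]
    rfl
  · rw [V, dif_neg (by omega), V, dif_neg h]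

/-- append the largest value at the end -/
noncomputable def app {n : ℕ} (u : Perm (Fin n)) : Perm (Fin (n+1)) :=
  Equiv.ofBijective (Fin.snoc (fun i => (u i).castSucc) (Fin.last n))
    (Finite.injective_iff_bijective.mp (by
      intro a b hab
      cases a using Fin.lastCases with
      | last =>
        cases b using Fin.lastCases with
        | last => rfl
        | cast j =>
          rw [Fin.snoc_last, Fin.snoc_castSucc] at hab
          exact absurd hab.symm (Fin.ne_of_lt (Fin.castSucc_lt_last _))
      | cast i =>
        cases b using Fin.lastCases with
        | last =>
          rw [Fin.snoc_last, Fin.snoc_castSucc] at hab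
          exact absurd hab (Fin.ne_of_lt (Fin.castSucc_lt_last _))
        | cast j =>
          rw [Fin.snoc_castSucc, Fin.snoc_castSucc] at hab
          exact congrArg Fin.castSucc (u.injective (Fin.castSucc_injective _ hab))))

lemma app_apply {n : ℕ} (u : Perm (Fin n)) (a : Fin (n+1)) :
    app u a = Fin.snoc (α := fun _ => Fin (n+1)) (fun i => (u i).castSucc) (Fin.last n) a := rfl

lemma app_last {n : ℕ} (u : Perm (Fin n)) : app u (Fin.last n) = Fin.last n := by
  rw [app_apply, Fin.snoc_last]

lemma app_cast {n : ℕ} (u : Perm (Fin n)) (i : Fin n) :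
    app u i.castSucc = (u i).castSucc := by
  rw [app_apply, Fin.snoc_castSucc]

lemma V_app_lt {n : ℕ} (u : Perm (Fin n)) {i : ℕ} (h : i < n) : V (app u) i = V u i := by
  rw [V_eq (app u) (show i < n+1 by omega), V_eq u h]
  have h1 : (⟨i, show i < n+1 by omega⟩ : Fin (n+1)) = Fin.castSucc ⟨i, h⟩ := rfl
  rw [h1, app_cast]
  rfl

lemma V_app_n {n : ℕ} (u : Perm (Fin n)) : V (app u) n = n := by
  rw [V_eq (app u) (show n < n+1 by omega)]
  have h1 : (⟨n, show n < n+1 by omega⟩ : Fin (n+1)) = Fin.last n := rfl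
  rw [h1, app_last, Fin.val_last]

lemma delp_ne {n : ℕ} (w : Perm (Fin (n+1))) (hw : w 0 = Fin.last n) (i : Fin n) :
    w i.succ ≠ Fin.last n :=
  fun hc => (Fin.succ_ne_zero i) (w.injective (hc.trans hw.symm))

/-- delete the first letter (which is assumed to be the largest value) -/
noncomputable def delp {n : ℕ} (w : Perm (Fin (n+1))) (hw : w 0 = Fin.last n) :
    Perm (Fin n) :=
  Equiv.ofBijective (fun i => (w i.succ).castPred (delp_ne w hw i))
    (Finite.injective_iff_bijective.mp (by
      intro a b hab
      have h2 : w a.succ = w b.succ := by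
        have h3 := congrArg Fin.castSucc hab
        rwa [Fin.castSucc_castPred, Fin.castSucc_castPred] at h3
      exact Fin.succ_injective _ (w.injective h2)))

lemma prep_delp {n : ℕ} (w : Perm (Fin (n+1))) (hw : w 0 = Fin.last n) :
    prep (delp w hw) = w := by
  apply Equiv.ext
  intro a
  cases a using Fin.cases with
  | zero => rw [prep_zero, hw]
  | succ i =>
    rw [prep_succ]
    exact Fin.ext rfl

lemma V_delp {n : ℕ} (w : Perm (Fin (n+1))) (hw : w 0 = Fin.last n) (i : ℕ) :
    V (delp w hw) i = V w (i+1) := by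
  by_cases h : i < n
  · rw [V_eq (delp w hw) h, V_eq w (show i+1 < n+1 by omega)]
    rfl
  · rw [V, dif_neg h, V, dif_neg (by omega)]

lemma dela_ne {n : ℕ} (w : Perm (Fin (n+1))) (hw : w (Fin.last n) = Fin.last n) (i : Fin n) :
    w i.castSucc ≠ Fin.last n :=
  fun hc => (Fin.ne_of_lt (Fin.castSucc_lt_last i)) (w.injective (hc.trans hw.symm))

/-- delete the last letter (which is assumed to be the largest value) -/
noncomputable def dela {n : ℕ} (w : Perm (Fin (n+1))) (hw : w (Fin.last n) = Fin.last n) :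
    Perm (Fin n) :=
  Equiv.ofBijective (fun i => (w i.castSucc).castPred (dela_ne w hw i))
    (Finite.injective_iff_bijective.mp (by
      intro a b hab
      have h2 : w a.castSucc = w b.castSucc := by
        have h3 := congrArg Fin.castSucc hab
        rwa [Fin.castSucc_castPred, Fin.castSucc_castPred] at h3
      exact Fin.castSucc_injective _ (w.injective h2)))

lemma app_dela {n : ℕ} (w : Perm (Fin (n+1))) (hw : w (Fin.last n) = Fin.last n) :
    app (dela w hw) = w := by
  apply Equiv.ext
  intro a
  cases a using Fin.lastCases with
  | last => rw [app_last, hw]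
  | cast i =>
    rw [app_cast]
    exact Fin.ext rfl

lemma V_dela {n : ℕ} (w : Perm (Fin (n+1))) (hw : w (Fin.last n) = Fin.last n)
    {i : ℕ} (h : i < n) : V (dela w hw) i = V w i := by
  rw [V_eq (dela w hw) h, V_eq w (show i < n+1 by omega)]
  rfl


lemma avoid_prep {n : ℕ} {u : Perm (Fin n)} (hu : AvoidsAll u pats) :
    AvoidsAll (prep u) pats := by
  rw [avoid_iff] at hu ⊢
  intro i h
  cases i with
  | zero =>
    have e1 : V (prep u) 1 = V u 0 := V_prep_succ u 0
    have e2 : V (prep u) 2 = V u 1 := V_prep_succ u 1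
    rw [show (0:ℕ)+1 = 1 from rfl, show (0:ℕ)+2 = 2 from rfl, V_prep_zero, e1, e2]
    have b1 : V u 0 < n := V_lt u (by omega)
    have b2 : V u 1 < n := V_lt u (by omega)
    unfold Good
    omega
  | succ j =>
    have hg := hu j (by omega)
    have e1 := V_prep_succ u j
    have e2 := V_prep_succ u (j+1)
    have e3 := V_prep_succ u (j+2)
    rw [show j+1+1 = (j+1)+1 from rfl, show j+1+2 = (j+2)+1 from by omega, e1, e2, e3]
    exact hg

lemma avoid_delp {n : ℕ} {w : Perm (Fin (n+1))} (hw0 : w 0 = Fin.last n)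
    (hw : AvoidsAll w pats) : AvoidsAll (delp w hw0) pats := by
  rw [avoid_iff] at hw ⊢
  intro i h
  have hg := hw (i+1) (by omega)
  rw [V_delp, V_delp, V_delp]
  rw [show i+1+1 = (i+1)+1 from rfl, show i+1+2 = (i+2)+1 from by omega] at hg
  exact hg

lemma avoid_app_iff {n : ℕ} (hn : 3 ≤ n) (u : Perm (Fin n)) :
    AvoidsAll (app u) pats ↔ (AvoidsAll u pats ∧ V u (n-2) < V u (n-1)) := by
  rw [avoid_iff, avoid_iff]
  constructor
  · intro H
    constructor
    · intro i h
      have hg := H i (by omega)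
      rwa [V_app_lt u (by omega), V_app_lt u (by omega), V_app_lt u (by omega)] at hg
    · have hg := H (n-2) (by omega)
      rw [show n-2+1 = n-1 from by omega, show n-2+2 = n from by omega,
        V_app_lt u (by omega), V_app_lt u (by omega), V_app_n] at hg
      have b1 : V u (n-2) < n := V_lt u (by omega)
      have b2 : V u (n-1) < n := V_lt u (by omega)
      unfold Good at hg
      omega
  · rintro ⟨hu, hasc⟩ i h
    by_cases hc : i + 3 ≤ n
    · have hg := hu i hc
      rwa [V_app_lt u (by omega), V_app_lt u (by omega), V_app_lt u (by omega)]
    · have hi : i = n - 2 := by omega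
      subst hi
      rw [show n-2+1 = n-1 from by omega, show n-2+2 = n from by omega,
        V_app_lt u (by omega), V_app_lt u (by omega), V_app_n]
      have b2 : V u (n-1) < n := V_lt u (by omega)
      unfold Good
      omega

lemma max_at {n : ℕ} (hn : 3 ≤ n) {w : Perm (Fin n)} (hw : AvoidsAll w pats)
    {j : ℕ} (hj : j < n) (hmax : V w j = n - 1) : j = 0 ∨ j = n - 1 := by
  by_contra hcon
  push_neg at hcon
  have h1 : 1 ≤ j ∧ j ≤ n - 2 := by omega
  have hg := (avoid_iff w).mp hw (j-1) (by omega)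
  rw [show j-1+1 = j from by omega, show j-1+2 = j+1 from by omega, hmax] at hg
  have b1 : V w (j-1) < n := V_lt w (by omega)
  have b2 : V w (j+1) < n := V_lt w (by omega)
  unfold Good at hg
  omega

lemma desc_all {n : ℕ} (hn : 3 ≤ n) {w : Perm (Fin n)} (hw : AvoidsAll w pats)
    (hend : V w (n-1) < V w (n-2)) : ∀ i, i + 2 ≤ n → V w (i+1) < V w i := by
  have H := (avoid_iff w).mp hw
  suffices h : ∀ d i, i + 2 ≤ n → n = i + 2 + d → V w (i+1) < V w i by
    intro i hi; exact h (n - i - 2) i hi (by omega)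
  intro d
  induction d with
  | zero =>
    intro i hi he
    obtain rfl : i = n - 2 := by omega
    rw [show n-2+1 = n-1 from by omega]
    exact hend
  | succ d ih =>
    intro i hi he
    have hd : V w (i+1+1) < V w (i+1) := ih (i+1) (by omega) (by omega)
    have hg := H i (by omega)
    rw [show i+1+1 = i+2 from by omega] at hd
    unfold Good at hg
    omega

lemma desc_rev {n : ℕ} (hn : 3 ≤ n) {w : Perm (Fin n)} (hw : AvoidsAll w pats)
    (hend : V w (n-1) < V w (n-2)) : w = Fin.revPerm := by
  have hd := desc_all hn hw hend
  have up : ∀ i, i < n → V w i + i ≤ n - 1 := by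
    intro i
    induction i with
    | zero => intro h; have := V_lt w h; omega
    | succ k ih =>
      intro h
      have h1 := ih (by omega)
      have h2 := hd k (by omega)
      omega
  have lo : ∀ d i, i < n → n = i + 1 + d → n - 1 ≤ V w i + i := by
    intro d
    induction d with
    | zero => intro i h he; omega
    | succ d ih =>
      intro i h he
      have h1 := ih (i+1) (by omega) (by omega)
      have h2 := hd i (by omega)
      omega
  apply Equiv.ext
  intro a
  apply Fin.ext
  have e : V w a.val = (w a).val := by rw [V_eq w a.isLt]
  have h1 := up a.val a.isLt
  have h2 := lo (n - 1 - a.val) a.val a.isLt (by omega)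
  rw [Fin.revPerm_apply, Fin.val_rev]
  have := a.isLt
  omega

lemma V_rev {n : ℕ} {j : ℕ} (hj : j < n) :
    V (Fin.revPerm : Perm (Fin n)) j = n - 1 - j := by
  rw [V_eq _ hj, Fin.revPerm_apply, Fin.val_rev]
  show n - (j + 1) = n - 1 - j
  omega

lemma avoid_rev {n : ℕ} : AvoidsAll (Fin.revPerm : Perm (Fin n)) pats := by
  rw [avoid_iff]
  intro i h
  rw [V_rev (show i < n by omega), V_rev (show i+1 < n by omega),
    V_rev (show i+2 < n by omega)]
  unfold Good
  omega


def A (n : ℕ) : Set (Perm (Fin n)) := {w | AvoidsAll w pats}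

lemma step (n : ℕ) (hn : 3 ≤ n) : (A (n+1)).ncard + 1 = 2 * (A n).ncard := by
  have hprepinj : Function.Injective (prep (n := n)) := by
    intro u u' h
    apply Equiv.ext
    intro i
    have h2 : prep u i.succ = prep u' i.succ := by rw [h]
    rw [prep_succ, prep_succ] at h2
    exact Fin.castSucc_injective _ h2
  have happinj : Function.Injective (app (n := n)) := by
    intro u u' h
    apply Equiv.ext
    intro i
    have h2 : app u i.castSucc = app u' i.castSucc := by rw [h]
    rw [app_cast, app_cast] at h2
    exact Fin.castSucc_injective _ h2
  have hunion : A (n+1) =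
      prep '' (A n) ∪ app '' (A n ∩ {u | V u (n-2) < V u (n-1)}) := by
    ext w
    constructor
    · intro hw
      have hw' : AvoidsAll w pats := hw
      obtain ⟨j, hj⟩ : ∃ j : Fin (n+1), w j = Fin.last n :=
        ⟨w.symm (Fin.last n), w.apply_symm_apply _⟩
      have hmax : V w j.val = (n+1) - 1 := by
        rw [V_eq w j.isLt]
        have : (⟨j.val, j.isLt⟩ : Fin (n+1)) = j := rfl
        rw [this, hj, Fin.val_last]
        omega
      have hm := max_at (show 3 ≤ n+1 by omega) hw' j.isLt hmax
      rcases hm with hm | hm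
      · left
        have hj0 : w 0 = Fin.last n := by
          have : j = 0 := Fin.ext hm
          rwa [this] at hj
        exact ⟨delp w hj0, avoid_delp hj0 hw', prep_delp w hj0⟩
      · right
        have hjl : w (Fin.last n) = Fin.last n := by
          have : j = Fin.last n := Fin.ext (by rw [Fin.val_last]; omega)
          rwa [this] at hj
        refine ⟨dela w hjl, ?_, app_dela w hjl⟩
        have he : app (dela w hjl) = w := app_dela w hjl
        have := (avoid_app_iff hn (dela w hjl)).mp (by rw [he]; exact hw')
        exact ⟨this.1, this.2⟩
    · intro hw
      rcases hw with ⟨u, hu, rfl⟩ | ⟨u, hu, rfl⟩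
      · exact avoid_prep hu
      · exact (avoid_app_iff hn u).mpr ⟨hu.1, hu.2⟩
  have hdisj : Disjoint (prep '' (A n)) (app '' (A n ∩ {u | V u (n-2) < V u (n-1)})) := by
    rw [Set.disjoint_left]
    rintro w ⟨u, _, rfl⟩ ⟨v, _, hv⟩
    have h1 : V (prep u) 0 = n := V_prep_zero u
    have h2 : V (app v) 0 = V v 0 := V_app_lt v (by omega)
    have h3 : V v 0 < n := V_lt v (by omega)
    rw [hv, h1] at h2
    omega
  have hsplit : A n = (A n ∩ {u | V u (n-2) < V u (n-1)}) ∪ {Fin.revPerm} := by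
    ext u
    constructor
    · intro hu
      by_cases hc : V u (n-2) < V u (n-1)
      · exact Or.inl ⟨hu, hc⟩
      · right
        have hne : V u (n-2) ≠ V u (n-1) := fun e => by
          have := V_inj u (show n-2 < n by omega) (show n-1 < n by omega) e
          omega
        exact desc_rev hn hu (by omega)
    · rintro (⟨hu, _⟩ | rfl)
      · exact hu
      · exact avoid_rev
  have hrevasc : ¬ (V (Fin.revPerm : Perm (Fin n)) (n-2) < V (Fin.revPerm : Perm (Fin n)) (n-1)) := by
    rw [V_rev (show n-2 < n by omega), V_rev (show n-1 < n by omega)]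
    omega
  have hdisj2 : Disjoint (A n ∩ {u | V u (n-2) < V u (n-1)}) ({Fin.revPerm} : Set (Perm (Fin n))) := by
    rw [Set.disjoint_singleton_right]
    exact fun h => hrevasc h.2
  have hcard2 : (A n).ncard = (A n ∩ {u | V u (n-2) < V u (n-1)}).ncard + 1 := by
    conv_lhs => rw [hsplit]
    rw [Set.ncard_union_eq hdisj2, Set.ncard_singleton]
  rw [hunion, Set.ncard_union_eq hdisj, Set.ncard_image_of_injective _ hprepinj,
    Set.ncard_image_of_injective _ happinj]
  omega

lemma base : Nat.card {w : Perm (Fin 3) // AvoidsAll w pats} = 3 := by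
  have hiff : ∀ w : Perm (Fin 3), AvoidsAll w pats ↔ Good (V w 0) (V w 1) (V w 2) := by
    intro w
    rw [avoid_iff]
    constructor
    · intro H
      exact H 0 (by omega)
    · intro H i h
      obtain rfl : i = 0 := by omega
      exact H
  rw [Nat.card_congr (Equiv.subtypeEquivRight hiff), Nat.card_eq_fintype_card]
  decide

end Stmt2Aux

/-- the number `g n` of permutations in `S_n` avoiding the consecutive
patterns 213, 132 and 231 satisfies `g n = 2 * g (n-1) - 1` for `n > 3`; since
`g 3 = 3`, we get `g n = 2^(n-2) + 1` for all `n ≥ 3`. -/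
theorem stmt2 (g : ℕ → ℕ)
    (hg : ∀ n : ℕ, g n = Nat.card {w : Equiv.Perm (Fin n) // AvoidsAll w {p213, p132, p231}}) :
    (∀ n : ℕ, 3 < n → g n = 2 * g (n - 1) - 1) ∧ g 3 = 3 ∧
      (∀ n : ℕ, 3 ≤ n → g n = 2 ^ (n - 2) + 1) := by
  have hA : ∀ n, g n = (Stmt2Aux.A n).ncard := by
    intro n
    rw [hg n, ← Nat.card_coe_set_eq]
    rfl
  have hbase : g 3 = 3 := by rw [hg 3]; exact Stmt2Aux.base
  have hrec : ∀ n, 3 ≤ n → g (n+1) + 1 = 2 * g n := by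
    intro n hn
    rw [hA, hA]
    exact Stmt2Aux.step n hn
  refine ⟨?_, hbase, ?_⟩
  · intro n hn
    have h := hrec (n-1) (by omega)
    rw [show n-1+1 = n from by omega] at h
    omega
  · intro n hn
    induction n, hn using Nat.le_induction with
    | base => simpa using hbase
    | succ n hn ih =>
      have h := hrec n hn
      have e : n + 1 - 2 = (n - 2) + 1 := by omega
      rw [e, pow_succ]
      have e2 : 2 ^ (n - 2) * 2 = 2 * 2 ^ (n-2) := by ring
      omega
end

section
/- For every n ≥ 2, M_{n-1} - M_{n-2} = Σ_{k=1}^{⌊(n-1)/2⌋} C(n-2, 2k-1) · Cat_k, where M_j denotes the j-th Motzkin number and Cat_k the k-th Catalan number. -/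
namespace MotzkinAux

open List DyckStep

/-- mask: which entries are nonzero -/
def mask (l : List ℤ) : List Bool := l.map (fun x => !decide (x = 0))

/-- nz: the nonzero entries -/
def nz (l : List ℤ) : List ℤ := l.filter (fun x => !decide (x = 0))

def merge : List Bool → List ℤ → List ℤ
  | [], _ => []
  | true :: bs, [] => []
  | true :: bs, x :: xs => x :: merge bs xs
  | false :: bs, xs => 0 :: merge bs xs

@[simp] lemma mask_length (l : List ℤ) : (mask l).length = l.length := by simp [mask]

lemma merge_mask_nz (l : List ℤ) : merge (mask l) (nz l) = l := by
  induction l with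
  | nil => rfl
  | cons x xs ih =>
    by_cases hx : x = 0
    · subst hx; simpa [mask, nz, merge] using ih
    · simpa [mask, nz, merge, hx] using ih

lemma nz_length (l : List ℤ) : (nz l).length = (mask l).count true := by
  induction l with
  | nil => rfl
  | cons x xs ih =>
    simp only [mask, nz] at ih ⊢
    by_cases hx : x = 0 <;> simp [hx, ih, count_cons]

lemma length_merge (bs : List Bool) (d : List ℤ) (h : d.length = bs.count true) :
    (merge bs d).length = bs.length := by
  induction bs generalizing d with
  | nil => simp [merge]
  | cons b bs ih =>
    cases b with
    | true =>
      rw [count_cons] at h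
      cases d with
      | nil => simp at h
      | cons x xs =>
        simp only [merge, length_cons]
        rw [ih xs (by simpa using h)]
    | false =>
      rw [count_cons] at h
      simp only [merge, length_cons]
      rw [ih d (by simpa using h)]

lemma mask_merge (bs : List Bool) (d : List ℤ) (h : d.length = bs.count true)
    (hd : ∀ x ∈ d, x ≠ 0) : mask (merge bs d) = bs := by
  induction bs generalizing d with
  | nil => simp [merge, mask]
  | cons b bs ih =>
    cases b with
    | true =>
      rw [count_cons] at h
      cases d with
      | nil => simp at h
      | cons x xs =>
        simp only [merge, mask, map_cons]
        rw [show (!decide (x = 0)) = true by simp [hd x (by simp)]]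
        have := ih xs (by simpa using h) (fun y hy => hd y (by simp [hy]))
        simpa [mask] using this
    | false =>
      rw [count_cons] at h
      simp only [merge, mask, map_cons]
      have := ih d (by simpa using h) hd
      simpa [mask] using this

lemma nz_merge (bs : List Bool) (d : List ℤ) (h : d.length = bs.count true)
    (hd : ∀ x ∈ d, x ≠ 0) : nz (merge bs d) = d := by
  induction bs generalizing d with
  | nil =>
    simp only [count_nil] at h
    rw [eq_nil_of_length_eq_zero h]; rfl
  | cons b bs ih =>
    cases b with
    | true =>
      rw [count_cons] at h
      cases d with
      | nil => simp at h
      | cons x xs =>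
        simp only [merge, nz, filter_cons]
        rw [show (!decide (x = 0)) = true by simp [hd x (by simp)]]
        have := ih xs (by simpa using h) (fun y hy => hd y (by simp [hy]))
        simpa [nz] using this
    | false =>
      rw [count_cons] at h
      simp only [merge, nz, filter_cons]
      have := ih d (by simpa using h) hd
      simpa [nz] using this

lemma mem_merge (bs : List Bool) (d : List ℤ) (x : ℤ) (hx : x ∈ merge bs d) :
    x = 0 ∨ x ∈ d := by
  induction bs generalizing d with
  | nil => simp [merge] at hx
  | cons b bs ih =>
    cases b with
    | true =>
      cases d with
      | nil => simp [merge] at hx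
      | cons y ys =>
        simp only [merge, mem_cons] at hx
        rcases hx with h | h
        · right; simp [h]
        · rcases ih ys h with h | h
          · left; exact h
          · right; simp [h]
    | false =>
      simp only [merge, mem_cons] at hx
      rcases hx with h | h
      · left; exact h
      · exact ih d h

lemma sum_merge (bs : List Bool) (d : List ℤ) (h : d.length = bs.count true) :
    (merge bs d).sum = d.sum := by
  induction bs generalizing d with
  | nil =>
    simp only [count_nil] at h
    rw [eq_nil_of_length_eq_zero h]; rfl
  | cons b bs ih =>
    cases b with
    | true =>
      rw [count_cons] at h
      cases d with
      | nil => simp at h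
      | cons x xs =>
        simp only [merge, sum_cons]
        rw [ih xs (by simpa using h)]
    | false =>
      rw [count_cons] at h
      simp only [merge, sum_cons]
      rw [ih d (by simpa using h)]; ring

lemma sum_nz (l : List ℤ) : (nz l).sum = l.sum := by
  induction l with
  | nil => rfl
  | cons x xs ih =>
    by_cases hx : x = 0 <;> simp [nz, hx, ih] <;> simp [nz] at ih <;> omega

lemma nz_take_sum (l : List ℤ) (k : ℕ) : ∃ j, ((nz l).take k).sum = (l.take j).sum := by
  induction l generalizing k with
  | nil => exact ⟨0, by simp [nz]⟩
  | cons x xs ih =>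
    simp only [nz] at ih ⊢
    by_cases hx : x = 0
    · obtain ⟨j, hj⟩ := ih k
      exact ⟨j + 1, by simpa [hx] using hj⟩
    · cases k with
      | zero => exact ⟨0, by simp⟩
      | succ k =>
        obtain ⟨j, hj⟩ := ih k
        exact ⟨j + 1, by simp [hx, hj]⟩

lemma merge_take_sum (bs : List Bool) (d : List ℤ) (k : ℕ) :
    ∃ j, ((merge bs d).take k).sum = (d.take j).sum := by
  induction bs generalizing d k with
  | nil => exact ⟨0, by simp [merge]⟩
  | cons b bs ih =>
    cases b with
    | true =>
      cases d with
      | nil => exact ⟨0, by simp [merge]⟩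
      | cons x xs =>
        cases k with
        | zero => exact ⟨0, by simp⟩
        | succ k =>
          obtain ⟨j, hj⟩ := ih xs k
          exact ⟨j + 1, by simp [merge, hj]⟩
    | false =>
      cases k with
      | zero => exact ⟨0, by simp⟩
      | succ k =>
        obtain ⟨j, hj⟩ := ih d k
        exact ⟨j, by simp [merge, hj]⟩


def IsDyckL (d : List ℤ) : Prop :=
  (∀ x ∈ d, x = 1 ∨ x = -1) ∧ (∀ k : ℕ, 0 ≤ (d.take k).sum) ∧ d.sum = 0

def stepToInt : DyckStep → ℤ | U => 1 | D => -1
def intToStep (x : ℤ) : DyckStep := if x = 1 then U else D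

@[simp] lemma intToStep_stepToInt (s : DyckStep) : intToStep (stepToInt s) = s := by
  cases s <;> simp [intToStep, stepToInt]

lemma stepToInt_intToStep (x : ℤ) (hx : x = 1 ∨ x = -1) : stepToInt (intToStep x) = x := by
  rcases hx with h | h <;> simp [intToStep, stepToInt, h]

lemma sum_map_stepToInt (s : List DyckStep) :
    (s.map stepToInt).sum = (s.count U : ℤ) - s.count D := by
  induction s with
  | nil => simp
  | cons a t ih =>
    cases a <;> simp [stepToInt, ih, count_cons] <;> push_cast <;> ring

lemma ofDyck_isDyckL (p : DyckWord) : IsDyckL (p.toList.map stepToInt) := by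
  refine ⟨?_, ?_, ?_⟩
  · intro x hx
    simp only [mem_map] at hx
    obtain ⟨s, _, rfl⟩ := hx
    cases s <;> simp [stepToInt]
  · intro k
    rw [← map_take, sum_map_stepToInt]
    have := p.count_D_le_count_U k
    omega
  · rw [sum_map_stepToInt, p.count_U_eq_count_D]; ring

def toDyck (d : List ℤ) (h : IsDyckL d) : DyckWord where
  toList := d.map intToStep
  count_U_eq_count_D := by
    have h2 := h.2.2
    have e : ∀ (t : List ℤ), (∀ x ∈ t, x = 1 ∨ x = -1) →
        ((t.map intToStep).count U : ℤ) - (t.map intToStep).count D = t.sum := by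
      intro t ht
      have : (t.map intToStep).map stepToInt = t := by
        rw [map_map]
        conv_rhs => rw [← List.map_id t]
        exact List.map_congr_left fun x hx => stepToInt_intToStep x (ht x hx)
      rw [← sum_map_stepToInt, this]
    have := e d h.1
    omega
  count_D_le_count_U i := by
    have h2 := h.2.1 i
    have e : ∀ (t : List ℤ), (∀ x ∈ t, x = 1 ∨ x = -1) →
        ((t.map intToStep).count U : ℤ) - (t.map intToStep).count D = t.sum := by
      intro t ht
      have : (t.map intToStep).map stepToInt = t := by
        rw [map_map]
        conv_rhs => rw [← List.map_id t]
        exact List.map_congr_left fun x hx => stepToInt_intToStep x (ht x hx)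
      rw [← sum_map_stepToInt, this]
    have := e (d.take i) (fun x hx => h.1 x (List.mem_of_mem_take hx))
    rw [← map_take]
    omega

@[simp] lemma toDyck_toList (d : List ℤ) (h : IsDyckL d) :
    (toDyck d h).toList = d.map intToStep := rfl

lemma semilength_toDyck (d : List ℤ) (h : IsDyckL d) :
    2 * (toDyck d h).semilength = d.length := by
  rw [DyckWord.two_mul_semilength_eq_length, toDyck_toList, length_map]

lemma ofDyck_toDyck (d : List ℤ) (h : IsDyckL d) :
    (toDyck d h).toList.map stepToInt = d := by
  rw [toDyck_toList, map_map]
  conv_rhs => rw [← List.map_id d]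
  exact List.map_congr_left fun x hx => stepToInt_intToStep x (h.1 x hx)

lemma toDyck_ofDyck (p : DyckWord) :
    toDyck (p.toList.map stepToInt) (ofDyck_isDyckL p) = p := by
  ext1
  rw [toDyck_toList, map_map]
  simp [Function.comp_def]


lemma finite_boolLists (m : ℕ) (P : List Bool → Prop) :
    Finite {bl : List Bool // bl.length = m ∧ P bl} := by
  have h := List.finite_length_eq (α := Bool) (n := m)
  haveI := h.to_subtype
  exact Finite.of_injective
    (fun x => (⟨x.val, x.2.1⟩ : {l : List Bool | l.length = m}))
    (by rintro ⟨a, ha⟩ ⟨b, hb⟩ h; simpa using congrArg Subtype.val h)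

lemma card_boolLists (m : ℕ) : ∀ j : ℕ,
    Nat.card {bl : List Bool // bl.length = m ∧ bl.count true = j} = m.choose j := by
  induction m with
  | zero =>
    intro j
    cases j with
    | zero =>
      haveI : Unique {bl : List Bool // bl.length = 0 ∧ bl.count true = 0} :=
        ⟨⟨⟨[], by simp⟩⟩, by
          rintro ⟨l, hl, hc⟩
          have : l = [] := List.length_eq_zero_iff.mp hl
          subst this; rfl⟩
      exact Nat.card_unique
    | succ j =>
      haveI : IsEmpty {bl : List Bool // bl.length = 0 ∧ bl.count true = j + 1} := by
        constructor
        rintro ⟨l, hl, hc⟩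
        have : l = [] := List.length_eq_zero_iff.mp hl
        subst this; simp at hc
      exact Nat.card_of_isEmpty
  | succ m ih =>
    intro j
    -- bijection cons
    have key : Nat.card {bl : List Bool // bl.length = m + 1 ∧ bl.count true = j} =
        Nat.card ({bl : List Bool // bl.length = m ∧ bl.count true = j} ⊕
          {bl : List Bool // bl.length = m ∧ bl.count true + 1 = j}) := by
      refine (Nat.card_congr (Equiv.ofBijective ?_ ?_)).symm
      · exact fun x => match x with
          | Sum.inl ⟨t, ht⟩ => ⟨false :: t, by simp [ht.1, ht.2, count_cons]⟩
          | Sum.inr ⟨t, ht⟩ => ⟨true :: t, by simp [ht.1, count_cons, ht.2]⟩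
      · constructor
        · rintro (⟨a, ha⟩ | ⟨a, ha⟩) (⟨b, hb⟩ | ⟨b, hb⟩) h <;>
            simp_all [Subtype.ext_iff]
        · rintro ⟨l, hl, hc⟩
          match l, hl with
          | false :: t, hl =>
            exact ⟨Sum.inl ⟨t, by simpa using hl, by simpa [count_cons] using hc⟩, rfl⟩
          | true :: t, hl =>
            exact ⟨Sum.inr ⟨t, by simpa using hl, by simpa [count_cons] using hc⟩, rfl⟩
    haveI := finite_boolLists m (fun bl => bl.count true = j)
    haveI := finite_boolLists m (fun bl => bl.count true + 1 = j)
    rw [key, Nat.card_sum, ih j]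
    cases j with
    | zero =>
      haveI : IsEmpty {bl : List Bool // bl.length = m ∧ bl.count true + 1 = 0} := by
        constructor; rintro ⟨l, hl, hc⟩; omega
      simp
    | succ j =>
      have e : {bl : List Bool // bl.length = m ∧ bl.count true + 1 = j + 1} ≃
          {bl : List Bool // bl.length = m ∧ bl.count true = j} :=
        Equiv.subtypeEquivRight (fun bl => by constructor <;> rintro ⟨h1, h2⟩ <;> exact ⟨h1, by omega⟩)
      rw [Nat.card_congr e, ih j, Nat.choose_succ_succ, Nat.succ_eq_add_one, Nat.add_comm]


-- NEW MATERIAL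
lemma stepToInt_injective : Function.Injective stepToInt := by
  intro a b h; cases a <;> cases b <;> simp [stepToInt] at h ⊢

/-- The nonzero part of a Motzkin path is a Dyck list. -/
lemma nz_isDyckL (l : List ℤ) (h : IsMotzkinPath l) : IsDyckL (nz l) := by
  obtain ⟨h1, h2, h3⟩ := h
  refine ⟨?_, ?_, ?_⟩
  · intro x hx
    have hm : x ∈ l := List.mem_of_mem_filter hx
    have hne : x ≠ 0 := by
      have := List.of_mem_filter hx
      simpa using this
    rcases h1 x hm with h | h | h <;> simp [h] at hne ⊢
  · intro k
    obtain ⟨j, hj⟩ := nz_take_sum l k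
    rw [hj]; exact h2 j
  · rw [sum_nz]; exact h3

/-- Abbreviation for the Motzkin subtype. -/
def MP (m : ℕ) := {l : List ℤ // l.length = m ∧ IsMotzkinPath l}

def Target (m : ℕ) := Σ k : Fin (m / 2 + 1),
  ({bl : List Bool // bl.length = m ∧ bl.count true = 2 * k.val} ×
   {p : DyckWord // p.semilength = k.val})

def F (m : ℕ) : Target m → MP m := fun x =>
  ⟨merge x.2.1.val (x.2.2.val.toList.map stepToInt), by
    obtain ⟨k, ⟨bl, hbl1, hbl2⟩, ⟨p, hp⟩⟩ := x
    have hd := ofDyck_isDyckL p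
    have hlen : (p.toList.map stepToInt).length = bl.count true := by
      rw [length_map, ← DyckWord.two_mul_semilength_eq_length, hp, hbl2]
    refine ⟨?_, ?_, ?_, ?_⟩
    · rw [length_merge _ _ hlen, hbl1]
    · intro x hx
      rcases mem_merge _ _ x hx with h | h
      · right; left; exact h
      · rcases hd.1 x h with h' | h'
        · left; exact h'
        · right; right; exact h'
    · intro k'
      obtain ⟨j, hj⟩ := merge_take_sum bl (p.toList.map stepToInt) k'
      rw [hj]; exact hd.2.1 j
    · rw [sum_merge _ _ hlen]; exact hd.2.2⟩

lemma F_bijective (m : ℕ) : Function.Bijective (F m) := by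
  constructor
  · rintro ⟨k, ⟨bl, hbl1, hbl2⟩, ⟨p, hp⟩⟩ ⟨k', ⟨bl', hbl1', hbl2'⟩, ⟨p', hp'⟩⟩ h
    replace h : merge bl (p.toList.map stepToInt) = merge bl' (p'.toList.map stepToInt) :=
      congrArg Subtype.val h
    have hdne : ∀ x ∈ p.toList.map stepToInt, x ≠ 0 := by
      intro x hx
      rcases (ofDyck_isDyckL p).1 x hx with h' | h' <;> simp [h']
    have hdne' : ∀ x ∈ p'.toList.map stepToInt, x ≠ 0 := by
      intro x hx
      rcases (ofDyck_isDyckL p').1 x hx with h' | h' <;> simp [h']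
    have hlen : (p.toList.map stepToInt).length = bl.count true := by
      rw [length_map, ← DyckWord.two_mul_semilength_eq_length, hp, hbl2]
    have hlen' : (p'.toList.map stepToInt).length = bl'.count true := by
      rw [length_map, ← DyckWord.two_mul_semilength_eq_length, hp', hbl2']
    have hb : bl = bl' := by
      rw [← mask_merge bl _ hlen hdne, ← mask_merge bl' _ hlen' hdne', h]
    have hpp : p = p' := by
      have := congrArg nz h
      rw [nz_merge bl _ hlen hdne, nz_merge bl' _ hlen' hdne'] at this
      have : p.toList = p'.toList :=
        List.map_injective_iff.mpr stepToInt_injective this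
      exact DyckWord.ext this
    have hkk : k = k' := by
      apply Fin.ext
      rw [← hp, ← hp', hpp]
    subst hkk hb hpp
    rfl
  · rintro ⟨l, hl, hm⟩
    have hd : IsDyckL (nz l) := nz_isDyckL l hm
    set p := toDyck (nz l) hd with hpdef
    have hsl : 2 * p.semilength = (nz l).length := semilength_toDyck _ _
    have hkb : p.semilength ≤ m / 2 := by
      have h1 : (nz l).length ≤ l.length := List.length_filter_le _ _
      omega
    refine ⟨⟨⟨p.semilength, by omega⟩, ⟨⟨mask l, ?_, ?_⟩, ⟨p, rfl⟩⟩⟩, ?_⟩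
    · rw [mask_length, hl]
    · rw [← nz_length, ← hsl]
    · apply Subtype.ext
      show merge (mask l) (p.toList.map stepToInt) = l
      rw [hpdef, ofDyck_toDyck, merge_mask_nz]

noncomputable instance fintypeTarget (m : ℕ) (k : ℕ) :
    Fintype ({bl : List Bool // bl.length = m ∧ bl.count true = 2 * k} ×
      {p : DyckWord // p.semilength = k}) := by
  haveI := finite_boolLists m (fun bl => bl.count true = 2 * k)
  exact Fintype.ofFinite _

lemma motzkin_formula (m : ℕ) :
    motzkin m = ∑ k ∈ Finset.range (m / 2 + 1), m.choose (2 * k) * catalan k := by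
  have e : MP m ≃ Target m := (Equiv.ofBijective (F m) (F_bijective m)).symm
  have h1 : motzkin m = Nat.card (Target m) := Nat.card_congr e
  rw [motzkin] at h1 ⊢
  rw [h1]
  have : Nat.card (Target m) = ∑ k : Fin (m / 2 + 1),
      Nat.card ({bl : List Bool // bl.length = m ∧ bl.count true = 2 * k.val} ×
        {p : DyckWord // p.semilength = k.val}) := by
    rw [Target, Nat.card_eq_fintype_card, Fintype.card_sigma]
    congr 1
    ext k
    rw [Nat.card_eq_fintype_card]
  rw [this]
  rw [Fin.sum_univ_eq_sum_range (fun k =>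
    Nat.card ({bl : List Bool // bl.length = m ∧ bl.count true = 2 * k} ×
      {p : DyckWord // p.semilength = k}))]
  apply Finset.sum_congr rfl
  intro k _
  haveI := finite_boolLists m (fun bl => bl.count true = 2 * k)
  rw [Nat.card_prod, card_boolLists, Nat.card_eq_fintype_card,
    DyckWord.card_dyckWord_semilength_eq_catalan]


end MotzkinAux

/-- `M_{n-1} - M_{n-2} = ∑_{k=1}^{⌊(n-1)/2⌋} C(n-2, 2k-1) · Cat_k` for `n ≥ 2`. -/
theorem stmt4 (n : ℕ) (hn : 2 ≤ n) :
    motzkin (n - 1) - motzkin (n - 2) =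
      ∑ k ∈ Finset.Icc 1 ((n - 1) / 2), Nat.choose (n - 2) (2 * k - 1) * catalan k := by
  obtain ⟨m, rfl⟩ : ∃ m, n = m + 2 := ⟨n - 2, by omega⟩
  have e1 : m + 2 - 1 = m + 1 := by omega
  have e2 : m + 2 - 2 = m := by omega
  rw [e1, e2]
  set t := (m + 1) / 2 with ht
  have hM1 : motzkin (m + 1) =
      ∑ k ∈ Finset.range (t + 1), (m + 1).choose (2 * k) * catalan k :=
    MotzkinAux.motzkin_formula (m + 1)
  have hM0 : motzkin m = ∑ k ∈ Finset.range (t + 1), m.choose (2 * k) * catalan k := by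
    rw [MotzkinAux.motzkin_formula m]
    apply Finset.sum_subset
    · intro k hk
      simp only [Finset.mem_range] at *
      omega
    · intro k hk hk'
      simp only [Finset.mem_range] at hk hk'
      have h2k : m < 2 * k := by omega
      rw [Nat.choose_eq_zero_of_lt h2k, zero_mul]
  have hE : (Finset.range (t + 1)).erase 0 = Finset.Icc 1 t := by
    ext k
    simp only [Finset.mem_erase, Finset.mem_range, Finset.mem_Icc]
    omega
  have h0 : (0 : ℕ) ∈ Finset.range (t + 1) := by simp
  have hs1 : ∑ k ∈ Finset.range (t + 1), (m + 1).choose (2 * k) * catalan k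
      = 1 + ∑ k ∈ Finset.Icc 1 t, (m + 1).choose (2 * k) * catalan k := by
    rw [← Finset.add_sum_erase _ _ h0, hE]
    simp
  have hs0 : ∑ k ∈ Finset.range (t + 1), m.choose (2 * k) * catalan k
      = 1 + ∑ k ∈ Finset.Icc 1 t, m.choose (2 * k) * catalan k := by
    rw [← Finset.add_sum_erase _ _ h0, hE]
    simp
  have hp : ∀ k ∈ Finset.Icc 1 t, (m + 1).choose (2 * k) * catalan k =
      m.choose (2 * k - 1) * catalan k + m.choose (2 * k) * catalan k := by
    intro k hk
    simp only [Finset.mem_Icc] at hk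
    have h2 : 2 * k = (2 * k - 1) + 1 := by omega
    have hc : (m + 1).choose (2 * k) = m.choose (2 * k - 1) + m.choose (2 * k) := by
      conv_lhs => rw [h2]
      rw [Nat.choose_succ_succ, Nat.succ_eq_add_one, ← h2]
    rw [hc, add_mul]
  rw [Finset.sum_congr rfl hp, Finset.sum_add_distrib] at hs1
  omega
end

section
/- For n ≥ 3, there are exactly n - 1 permutations in S_n that simultaneously avoid the consecutive patterns 132, 312, 321, and 213. -/
namespace Stmt5Aux

/-- Values of a permutation as a function `ℕ → ℕ` (0 outside range). -/
def wv {n : ℕ} (w : Equiv.Perm (Fin n)) (i : ℕ) : ℕ :=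
  if h : i < n then (w ⟨i, h⟩).val else 0

lemma wv_eq {n : ℕ} (w : Equiv.Perm (Fin n)) (i : ℕ) (h : i < n) :
    wv w i = (w ⟨i, h⟩).val := dif_pos h

lemma wv_lt {n : ℕ} (w : Equiv.Perm (Fin n)) (i : ℕ) (h : i < n) : wv w i < n := by
  rw [wv_eq w i h]; exact (w ⟨i, h⟩).isLt

lemma wv_inj {n : ℕ} (w : Equiv.Perm (Fin n)) {i j : ℕ} (hi : i < n) (hj : j < n)
    (hij : wv w i = wv w j) : i = j := by
  rw [wv_eq w i hi, wv_eq w j hj] at hij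
  have := w.injective (Fin.ext hij)
  exact Fin.mk.inj_iff.mp this

lemma patAt_iff {n : ℕ} (w : Equiv.Perm (Fin n)) (i : ℕ) (h : i + 3 ≤ n) (p : Pat) :
    PatAt w i h p ↔ p (wv w i) (wv w (i+1)) (wv w (i+2)) := by
  unfold PatAt
  rw [wv_eq w i (by omega), wv_eq w (i+1) (by omega), wv_eq w (i+2) (by omega)]

def PS : Set Pat := {p132, p312, p321, p213}

lemma mem132 : p132 ∈ PS := Or.inl rfl
lemma mem312 : p312 ∈ PS := Or.inr (Or.inl rfl)
lemma mem321 : p321 ∈ PS := Or.inr (Or.inr (Or.inl rfl))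
lemma mem213 : p213 ∈ PS := Or.inr (Or.inr (Or.inr rfl))

/-- First letter of any factor of length 3 is less than the second. -/
lemma step_lt {n : ℕ} {w : Equiv.Perm (Fin n)} (hw : AvoidsAll w PS)
    (i : ℕ) (h : i + 3 ≤ n) : wv w i < wv w (i+1) := by
  have h1 := (patAt_iff w i h p132).not.mp (hw i h p132 mem132)
  have h2 := (patAt_iff w i h p312).not.mp (hw i h p312 mem312)
  have h3 := (patAt_iff w i h p321).not.mp (hw i h p321 mem321)
  have h4 := (patAt_iff w i h p213).not.mp (hw i h p213 mem213)
  have d1 : wv w i ≠ wv w (i+1) := fun e => by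
    have := wv_inj w (by omega) (by omega) e; omega
  have d2 : wv w (i+1) ≠ wv w (i+2) := fun e => by
    have := wv_inj w (by omega) (by omega) e; omega
  have d3 : wv w i ≠ wv w (i+2) := fun e => by
    have := wv_inj w (by omega) (by omega) e; omega
  unfold p132 p312 p321 p213 at *
  omega

lemma chain_lt {n : ℕ} {w : Equiv.Perm (Fin n)} (hw : AvoidsAll w PS)
    (j k : ℕ) (hjk : j < k) (hk : k + 2 ≤ n) : wv w j < wv w k := by
  induction k with
  | zero => omega
  | succ m ih =>
    rcases Nat.lt_or_ge j m with hm | hm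
    · exact lt_trans (ih hm (by omega)) (step_lt hw m (by omega))
    · have : j = m := by omega
      subst this
      exact step_lt hw j (by omega)

lemma lower_bd {n : ℕ} {w : Equiv.Perm (Fin n)} (hw : AvoidsAll w PS)
    (j : ℕ) (hj : j + 2 ≤ n) : j ≤ wv w j := by
  induction j with
  | zero => omega
  | succ m ih =>
    have h1 := ih (by omega)
    have h2 := step_lt hw m (by omega)
    omega

lemma upper_bd {n : ℕ} {w : Equiv.Perm (Fin n)} (hw : AvoidsAll w PS)
    (j : ℕ) (hj : j + 2 ≤ n) : wv w j ≤ j + 1 := by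
  have key : ∀ d, d + 2 ≤ n → wv w (n - 2 - d) ≤ n - 1 - d := by
    intro d
    induction d with
    | zero => intro _; have := wv_lt w (n-2-0) (by omega); omega
    | succ m ih =>
      intro hm
      have h1 := ih (by omega)
      have h2 : wv w (n - 2 - (m+1)) < wv w (n - 2 - m) := by
        have := chain_lt hw (n - 2 - (m+1)) (n - 2 - m) (by omega) (by omega)
        exact this
      omega
  have := key (n - 2 - j) (by omega)
  have e1 : n - 2 - (n - 2 - j) = j := by omega
  have e2 : n - 1 - (n - 2 - j) = j + 1 := by omega
  rw [e1, e2] at this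
  exact this

lemma ne_last {n : ℕ} (w : Equiv.Perm (Fin n)) (hn : 3 ≤ n) (j : ℕ) (hj : j + 2 ≤ n) :
    wv w j ≠ wv w (n-1) := fun e => by
  have := wv_inj w (by omega) (by omega) e; omega

/-- values at positions ≥ v (v = last letter). -/
lemma val_ge {n : ℕ} {w : Equiv.Perm (Fin n)} (hw : AvoidsAll w PS) (hn : 3 ≤ n)
    (d : ℕ) (hd : wv w (n-1) + d + 2 ≤ n) : wv w (wv w (n-1) + d) = wv w (n-1) + d + 1 := by
  induction d with
  | zero =>
    have h1 := lower_bd hw (wv w (n-1)) (by omega)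
    have h2 := upper_bd hw (wv w (n-1)) (by omega)
    have h3 := ne_last w hn (wv w (n-1)) (by omega)
    rw [Nat.add_zero]
    omega
  | succ m ih =>
    have h1 := ih (by omega)
    have h2 := step_lt hw (wv w (n-1) + m) (by omega)
    have h3 := upper_bd hw (wv w (n-1) + m + 1) (by omega)
    have e : wv w (n-1) + m + 1 = wv w (n-1) + (m + 1) := by omega
    rw [e] at h2 h3
    omega

/-- values at positions < v. -/
lemma val_lt {n : ℕ} {w : Equiv.Perm (Fin n)} (hw : AvoidsAll w PS) (hn : 3 ≤ n)
    (d : ℕ) (hd : d + 1 ≤ wv w (n-1)) : wv w (wv w (n-1) - 1 - d) = wv w (n-1) - 1 - d := by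
  have hvlt : wv w (n-1) < n := wv_lt w (n-1) (by omega)
  induction d with
  | zero =>
    rw [Nat.sub_zero]
    rcases Nat.lt_or_ge (wv w (n-1)) (n-1) with hc | hc
    · -- v ≤ n-2, use w v = v+1
      have h0 := val_ge hw hn 0 (by omega)
      have h1 := chain_lt hw (wv w (n-1) - 1) (wv w (n-1) + 0) (by omega) (by omega)
      have h2 := lower_bd hw (wv w (n-1) - 1) (by omega)
      have h3 := ne_last w hn (wv w (n-1) - 1) (by omega)
      simp only [Nat.add_zero] at h0 h1
      omega
    · -- v = n-1, position n-2
      have h1 := upper_bd hw (n-2) (by omega)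
      have h2 := lower_bd hw (n-2) (by omega)
      have h3 := ne_last w hn (n-2) (by omega)
      have e : wv w (n-1) - 1 = n - 2 := by omega
      rw [e]
      omega
  | succ m ih =>
    have h1 := ih (by omega)
    have h2 : wv w (wv w (n-1) - 1 - (m+1)) < wv w (wv w (n-1) - 1 - m) :=
      chain_lt hw _ _ (by omega) (by omega)
    have h3 := lower_bd hw (wv w (n-1) - 1 - (m+1)) (by omega)
    omega

/-- Full description of an avoiding permutation's values. -/
lemma val_desc {n : ℕ} {w : Equiv.Perm (Fin n)} (hw : AvoidsAll w PS) (hn : 3 ≤ n)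
    (j : ℕ) (hj : j + 2 ≤ n) :
    wv w j = if j < wv w (n-1) then j else j + 1 := by
  set v := wv w (n-1) with hv
  split_ifs with hc
  · have := val_lt hw hn (v - 1 - j) (by omega)
    have e : v - 1 - (v - 1 - j) = j := by omega
    rw [e] at this; exact this
  · have := val_ge hw hn (j - v) (by omega)
    have e : v + (j - v) = j := by omega
    rw [e] at this; omega

lemma v_ne {n : ℕ} {w : Equiv.Perm (Fin n)} (hw : AvoidsAll w PS) (hn : 3 ≤ n) :
    wv w (n-1) ≠ n - 2 := by
  intro hv
  have h1 := val_desc hw hn (n-3) (by omega)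
  have h2 := val_desc hw hn (n-2) (by omega)
  rw [hv] at h1 h2
  have h1 : wv w (n-3) = n - 3 := by rw [h1, if_pos (by omega)]
  have h2 : wv w (n-2) = n - 1 := by rw [h2, if_neg (by omega)]; omega
  have h3 := (patAt_iff w (n-3) (by omega) p132).not.mp (hw (n-3) (by omega) p132 mem132)
  have e1 : n - 3 + 1 = n - 2 := by omega
  have e2 : n - 3 + 2 = n - 1 := by omega
  rw [e1, e2] at h3
  unfold p132 at h3
  omega

/-- The canonical avoiding permutation with last letter `v`. -/
noncomputable def cperm (n : ℕ) (v : Fin n) : Equiv.Perm (Fin n) :=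
  Equiv.ofBijective
    (fun j => if _h1 : j.val = n - 1 then v
      else if _h2 : j.val < v.val then j else ⟨j.val + 1, by have := j.isLt; omega⟩)
    (Finite.injective_iff_bijective.mp (by
      intro a b hab
      have hv := v.isLt
      have ha := a.isLt
      have hb := b.isLt
      apply Fin.ext
      have hab' := congrArg Fin.val hab
      simp only at hab'
      split_ifs at hab' <;> simp_all <;> omega))

lemma cperm_val {n : ℕ} (v : Fin n) (j : ℕ) (hj : j < n) :
    wv (cperm n v) j = if j = n - 1 then v.val else if j < v.val then j else j + 1 := by
  rw [wv_eq _ j hj]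
  unfold cperm
  rw [Equiv.ofBijective_apply]
  split_ifs <;> rfl

lemma cperm_avoids {n : ℕ} (hn : 3 ≤ n) (v : Fin n) (hv : v.val ≠ n - 2) :
    AvoidsAll (cperm n v) PS := by
  intro i h p hp
  rw [patAt_iff]
  have hvlt := v.isLt
  have e0 := cperm_val v i (by omega)
  have e1 := cperm_val v (i+1) (by omega)
  have e2 := cperm_val v (i+2) (by omega)
  have hi0 : i ≠ n - 1 := by omega
  have hi1 : i + 1 ≠ n - 1 := by omega
  rw [if_neg hi0] at e0
  rw [if_neg hi1] at e1
  rcases hp with h | h | h | h <;> subst h <;>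
    (first | unfold p132 | unfold p312 | unfold p321 | unfold p213) <;>
    (intro hc; split_ifs at e0 e1 e2 <;> omega)

lemma eq_cperm {n : ℕ} {w : Equiv.Perm (Fin n)} (hw : AvoidsAll w PS) (hn : 3 ≤ n) :
    w = cperm n ⟨wv w (n-1), wv_lt w (n-1) (by omega)⟩ := by
  apply Equiv.ext
  intro j
  apply Fin.ext
  have hj := j.isLt
  have h1 : (w j).val = wv w j.val := by rw [wv_eq w j.val hj]
  have h2 : (cperm n ⟨wv w (n-1), wv_lt w (n-1) (by omega)⟩ j).val
      = wv (cperm n ⟨wv w (n-1), wv_lt w (n-1) (by omega)⟩) j.val :=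
    (wv_eq _ j.val hj).symm
  rw [h1, h2, cperm_val]
  · rcases Nat.lt_or_ge j.val (n-1) with hc | hc
    · rw [if_neg (show ¬ (j.val = n - 1) by omega)]
      exact val_desc hw hn j.val (by omega)
    · have hjv : j.val = n - 1 := by omega
      rw [if_pos hjv, hjv]
  · exact hj

lemma cperm_last {n : ℕ} (hn : 3 ≤ n) (v : Fin n) :
    wv (cperm n v) (n-1) = v.val := by
  rw [cperm_val v (n-1) (by omega), if_pos rfl]

end Stmt5Aux

/-- for `n ≥ 3` there are exactly `n - 1` permutations in `S_n` avoiding the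
consecutive patterns 132, 312, 321 and 213. -/
theorem stmt5 (n : ℕ) (hn : 3 ≤ n) :
    Nat.card {w : Equiv.Perm (Fin n) // AvoidsAll w {p132, p312, p321, p213}} = n - 1 := by
  open Stmt5Aux in
  have hPS : ({p132, p312, p321, p213} : Set Pat) = PS := rfl
  have key : Nat.card {w : Equiv.Perm (Fin n) // AvoidsAll w PS}
      = Nat.card {v : Fin n // v.val ≠ n - 2} := by
    apply Nat.card_congr
    refine Equiv.symm (Equiv.ofBijective
      (fun v => ⟨cperm n v.1, cperm_avoids hn v.1 v.2⟩) ⟨?_, ?_⟩)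
    · intro a b hab
      have : cperm n a.1 = cperm n b.1 := congrArg Subtype.val hab
      have h2 : wv (cperm n a.1) (n-1) = wv (cperm n b.1) (n-1) := by rw [this]
      rw [cperm_last hn, cperm_last hn] at h2
      exact Subtype.ext (Fin.ext h2)
    · rintro ⟨w, hw⟩
      refine ⟨⟨⟨wv w (n-1), wv_lt w (n-1) (by omega)⟩, v_ne hw hn⟩, ?_⟩
      exact Subtype.ext (eq_cperm hw hn).symm
  rw [hPS, key]
  have : {v : Fin n // v.val ≠ n - 2} ≃ {v : Fin n // v ≠ ⟨n-2, by omega⟩} := by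
    apply Equiv.subtypeEquivRight
    intro v
    constructor
    · intro h he; exact h (congrArg Fin.val he)
    · intro h he; exact h (Fin.ext he)
  rw [Nat.card_congr this, Nat.card_eq_fintype_card]
  have : ∀ v : Fin n, (v ≠ ⟨n-2, by omega⟩) = ¬ (v = ⟨n-2, by omega⟩) := fun _ => rfl
  rw [Fintype.card_subtype_compl, Fintype.card_subtype_eq, Fintype.card_fin]
end

section
/- Under the equivalence relation on S_n generated by replacing a factor of three adjacent letters whose order pattern lies in {123, 132, 321} by a rearrangement of those letters forming another pattern in {123, 132, 321}, the position parity of the letter 1 is invariant: if w ≡ w' then the position of 1 in w and the position of 1 in w' have the same parity. -/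
/-- under the `{123, 132, 321}`-equivalence, the position parity of the
letter `1` is invariant. -/
theorem stmt6 (n : ℕ) (hn : 1 ≤ n) (w w' : Equiv.Perm (Fin n))
    (h : PattEquiv {({p123, p132, p321} : Set Pat)} w w') :
    (w.symm ⟨0, by omega⟩).val % 2 = (w'.symm ⟨0, by omega⟩).val % 2 := by
  have key : ∀ v v' : Equiv.Perm (Fin n), Step3 {({p123, p132, p321} : Set Pat)} v v' →
      (v.symm ⟨0, by omega⟩).val % 2 = (v'.symm ⟨0, by omega⟩).val % 2 := by
    intro v v' hs
    obtain ⟨Q, hQ, i, hi, hout, ⟨p, hp, hpat⟩, ⟨q, hq, hqat⟩⟩ := hs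
    simp only [Set.mem_singleton_iff] at hQ
    subst hQ
    set z : Fin n := ⟨0, by omega⟩ with hz
    set j := v.symm z with hj
    set j' := v'.symm z with hj'
    have hvj : v j = z := v.apply_symm_apply z
    have hvj' : v' j' = z := v'.apply_symm_apply z
    have inside : ∀ (u : Equiv.Perm (Fin n)) (k : Fin n), u k = z →
        i ≤ k.val → k.val < i + 3 →
        (∃ r ∈ ({p123, p132, p321} : Set Pat), PatAt u i hi r) → k.val % 2 = i % 2 := by
      intro u k huk hk1 hk2 ⟨r, hr, hrat⟩
      rcases (by omega : k.val = i ∨ k.val = i + 1 ∨ k.val = i + 2) with hk | hk | hk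
      · omega
      · exfalso
        have hkk : k = (⟨i + 1, by omega⟩ : Fin n) := Fin.ext hk
        rw [hkk] at huk
        have hb : (u (⟨i + 1, by omega⟩ : Fin n)).val = 0 := by rw [huk]
        simp only [Set.mem_insert_iff, Set.mem_singleton_iff] at hr
        rcases hr with hr | hr | hr <;> subst hr <;>
          simp only [PatAt, p123, p132, p321] at hrat <;> omega
      · omega
    by_cases hcase : j.val < i ∨ i + 3 ≤ j.val
    · have h1 : v' j = z := (hout j hcase).symm.trans hvj
      have h2 : j' = j := by rw [hj', ← h1, Equiv.symm_apply_apply]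
      rw [h2]
    · push_neg at hcase
      have hcase' : ¬ (j'.val < i ∨ i + 3 ≤ j'.val) := by
        intro hc
        have h1 : v j' = z := (hout j' hc).trans hvj'
        have h2 : j = j' := by rw [hj, ← h1, Equiv.symm_apply_apply]
        omega
      push_neg at hcase'
      have e1 := inside v j hvj hcase.1 hcase.2 ⟨p, hp, hpat⟩
      have e2 := inside v' j' hvj' hcase'.1 hcase'.2 ⟨q, hq, hqat⟩
      omega
  induction h with
  | rel a b hab => exact key a b hab
  | refl a => rfl
  | symm a b _ ih => exact ih.symm
  | trans a b c _ _ ih1 ih2 => exact ih1.trans ih2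
end

section
/- Define the fall of x ∈ S_n as the set of k ∈ {1,...,n} such that every letter greater than k in x occupies a position of the same parity as the position of k. If the fall of x has size j, then the number of permutations y ∈ S_n such that every letter has the same position parity in y as in x and the letters of the fall appear in the same relative order in y as in x equals (⌊n/2⌋! · ⌈n/2⌉!) / j!. -/
section Stmt11Aux
open Equiv



variable {n : ℕ}

/-- Even positions of `Fin n` number `(n+1)/2`. -/
def evenEquiv (n : ℕ) : {a : Fin n // a.val % 2 = 0} ≃ Fin ((n + 1) / 2) where
  toFun a := ⟨a.1.val / 2, by have h1 := a.1.isLt; have h2 := a.2; omega⟩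
  invFun k := ⟨⟨2 * k.val, by have := k.isLt; omega⟩, by show 2 * k.val % 2 = 0; omega⟩
  left_inv a := by
    apply Subtype.ext; apply Fin.ext
    show 2 * (a.1.val / 2) = a.1.val
    have := a.2; omega
  right_inv k := by
    apply Fin.ext
    show 2 * k.val / 2 = k.val
    omega

/-- Odd positions of `Fin n` number `n/2`. -/
def oddEquiv (n : ℕ) : {a : Fin n // ¬ a.val % 2 = 0} ≃ Fin (n / 2) where
  toFun a := ⟨a.1.val / 2, by have h1 := a.1.isLt; have h2 := a.2; omega⟩
  invFun k := ⟨⟨2 * k.val + 1, by have := k.isLt; omega⟩, by show ¬ (2 * k.val + 1) % 2 = 0; omega⟩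
  left_inv a := by
    apply Subtype.ext; apply Fin.ext
    show 2 * ((a.1.val) / 2) + 1 = a.1.val
    have := a.2; omega
  right_inv k := by
    apply Fin.ext
    show (2 * k.val + 1) / 2 = k.val
    omega

/-- The number of parity-preserving permutations of `Fin n`. -/
lemma card_parity_perm (n : ℕ) :
    Nat.card {τ : Perm (Fin n) // ∀ a : Fin n, (τ a).val % 2 = a.val % 2}
      = Nat.factorial ((n + 1) / 2) * Nat.factorial (n / 2) := by
  classical
  set P : Fin n → Prop := fun a => a.val % 2 = 0 with hP
  let Φ : Perm {a : Fin n // P a} × Perm {a : Fin n // ¬ P a} →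
      {τ : Perm (Fin n) // ∀ a : Fin n, (τ a).val % 2 = a.val % 2} := fun στ =>
    ⟨Perm.subtypeCongr στ.1 στ.2, by
      intro a
      by_cases h : P a
      · rw [Perm.subtypeCongr.left_apply _ _ h]
        have h2 := (στ.1 ⟨a, h⟩).2
        simp only [hP] at h h2 ⊢
        omega
      · rw [Perm.subtypeCongr.right_apply _ _ h]
        have h2 := (στ.2 ⟨a, h⟩).2
        simp only [hP] at h h2 ⊢
        omega⟩
  have hbij : Function.Bijective Φ := by
    constructor
    · intro a b hab
      exact Equiv.Perm.subtypeCongrHom_injective P (Subtype.ext_iff.mp hab)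
    · rintro ⟨τ, hτ⟩
      have hiff : ∀ a : Fin n, P (τ a) ↔ P a := by
        intro a; have := hτ a; simp only [hP]; omega
      have hiff' : ∀ a : Fin n, ¬ P (τ a) ↔ ¬ P a := fun a => not_congr (hiff a)
      refine ⟨⟨τ.subtypePerm hiff, τ.subtypePerm hiff'⟩, ?_⟩
      apply Subtype.ext
      apply Equiv.ext
      intro a
      by_cases h : P a
      · rw [show ((Φ ⟨τ.subtypePerm hiff, τ.subtypePerm hiff'⟩ : _) : Perm (Fin n)) =
          Perm.subtypeCongr (τ.subtypePerm hiff) (τ.subtypePerm hiff') from rfl,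
          Perm.subtypeCongr.left_apply _ _ h]
        rfl
      · rw [show ((Φ ⟨τ.subtypePerm hiff, τ.subtypePerm hiff'⟩ : _) : Perm (Fin n)) =
          Perm.subtypeCongr (τ.subtypePerm hiff) (τ.subtypePerm hiff') from rfl,
          Perm.subtypeCongr.right_apply _ _ h]
        rfl
  rw [← Nat.card_congr (Equiv.ofBijective Φ hbij), Nat.card_prod,
    Nat.card_eq_fintype_card, Nat.card_eq_fintype_card, Fintype.card_perm, Fintype.card_perm,
    Fintype.card_congr (evenEquiv n), Fintype.card_congr (oddEquiv n),
    Fintype.card_fin, Fintype.card_fin]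





variable {n : ℕ}

/-- The strictly monotone (on `s`) part of a permutation, as an order embedding. -/
def monoEmb (s : Finset (Fin n)) (τ : Perm (Fin n))
    (hm : ∀ a ∈ s, ∀ b ∈ s, (τ a < τ b ↔ a < b)) : {a // a ∈ s} ↪o Fin n :=
  OrderEmbedding.ofStrictMono (fun a => τ a.1)
    (fun a b hab => (hm _ a.2 _ b.2).mpr (Subtype.coe_lt_coe.mpr hab))

lemma range_monoEmb (s : Finset (Fin n)) (τ : Perm (Fin n))
    (hm : ∀ a ∈ s, ∀ b ∈ s, (τ a < τ b ↔ a < b)) :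
    Set.range (monoEmb s τ hm) = ↑(s.image τ) := by
  ext b
  constructor
  · rintro ⟨a, rfl⟩
    exact Finset.mem_coe.mpr (Finset.mem_image_of_mem τ a.2)
  · intro hb
    obtain ⟨a, ha, rfl⟩ := Finset.mem_image.mp (Finset.mem_coe.mp hb)
    exact ⟨⟨a, ha⟩, rfl⟩

lemma image_mul_ofSubtype (s : Finset (Fin n)) (τ : Perm (Fin n)) (π : Perm {a // a ∈ s}) :
    s.image (⇑(τ * Equiv.Perm.ofSubtype π)) = s.image τ := by
  classical
  ext b
  simp only [Finset.mem_image]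
  constructor
  · rintro ⟨a, ha, rfl⟩
    refine ⟨(π ⟨a, ha⟩ : Fin n), (π ⟨a, ha⟩).2, ?_⟩
    rw [Equiv.Perm.mul_apply, Equiv.Perm.ofSubtype_apply_of_mem π ha]
  · rintro ⟨a, ha, rfl⟩
    refine ⟨(π.symm ⟨a, ha⟩ : Fin n), (π.symm ⟨a, ha⟩).2, ?_⟩
    rw [Equiv.Perm.mul_apply, Equiv.Perm.ofSubtype_apply_coe, Equiv.apply_symm_apply]

lemma key (s : Finset (Fin n))
    (hcoh : ∀ a ∈ s, ∀ b ∈ s, a.val % 2 = b.val % 2) :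
    Nat.card {τ : Perm (Fin n) // (∀ a : Fin n, (τ a).val % 2 = a.val % 2) ∧
        ∀ a ∈ s, ∀ b ∈ s, (τ a < τ b ↔ a < b)} * Nat.factorial s.card
      = Nat.card {τ : Perm (Fin n) // ∀ a : Fin n, (τ a).val % 2 = a.val % 2} := by
  classical
  let M := {τ : Perm (Fin n) // (∀ a : Fin n, (τ a).val % 2 = a.val % 2) ∧
        ∀ a ∈ s, ∀ b ∈ s, (τ a < τ b ↔ a < b)}
  let PP := {τ : Perm (Fin n) // ∀ a : Fin n, (τ a).val % 2 = a.val % 2}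
  let Φ : M × Perm {a // a ∈ s} → PP := fun p =>
    ⟨(p.1 : Perm (Fin n)) * Equiv.Perm.ofSubtype p.2, by
      intro a
      by_cases ha : a ∈ s
      · rw [Equiv.Perm.mul_apply, Equiv.Perm.ofSubtype_apply_of_mem p.2 ha]
        have h1 := p.1.2.1 (p.2 ⟨a, ha⟩ : Fin n)
        have h2 := hcoh _ (p.2 ⟨a, ha⟩).2 _ ha
        omega
      · rw [Equiv.Perm.mul_apply, Equiv.Perm.ofSubtype_apply_of_not_mem p.2 ha]
        exact p.1.2.1 a⟩
  have hbij : Function.Bijective Φ := by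
    constructor
    · rintro ⟨⟨τ, hpp, hm⟩, π⟩ ⟨⟨τ', hpp', hm'⟩, π'⟩ h
      have heq : τ * Equiv.Perm.ofSubtype π = τ' * Equiv.Perm.ofSubtype π' :=
        Subtype.ext_iff.mp h
      -- agreement off s
      have hoff : ∀ a : Fin n, a ∉ s → τ a = τ' a := by
        intro a ha
        have := DFunLike.congr_fun heq a
        simpa [Equiv.Perm.mul_apply, Equiv.Perm.ofSubtype_apply_of_not_mem _ ha] using this
      -- equal images on s
      have himg : s.image τ = s.image τ' := by
        rw [← image_mul_ofSubtype s τ π, ← image_mul_ofSubtype s τ' π', heq]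
      -- agreement on s via uniqueness of order embeddings with equal range
      have hon : ∀ a : Fin n, (ha : a ∈ s) → τ a = τ' a := by
        haveI : WellFoundedLT {a // a ∈ s} := Finite.to_wellFoundedLT
        have hr : Set.range (monoEmb s τ hm) = Set.range (monoEmb s τ' hm') := by
          rw [range_monoEmb, range_monoEmb, himg]
        have := OrderEmbedding.range_inj.mp hr
        intro a ha
        exact DFunLike.congr_fun this ⟨a, ha⟩
      have hττ' : τ = τ' := by
        apply Equiv.ext
        intro a
        by_cases ha : a ∈ s
        · exact hon a ha
        · exact hoff a ha
      subst hττ'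
      have hππ' : Equiv.Perm.ofSubtype π = Equiv.Perm.ofSubtype π' :=
        mul_left_cancel heq
      have : π = π' := by
        apply Equiv.ext
        intro c
        apply Subtype.coe_injective
        have := DFunLike.congr_fun hππ' (c : Fin n)
        simpa [Equiv.Perm.ofSubtype_apply_coe] using this
      rw [this]
    · rintro ⟨τ, hτ⟩
      have ht : (s.image τ).card = s.card := Finset.card_image_of_injective s τ.injective
      let u : {a // a ∈ s} ≃o {b // b ∈ s.image τ} :=
        (s.orderIsoOfFin rfl).symm.trans ((s.image τ).orderIsoOfFin ht)
      let r : {a // a ∈ s} ≃ {b // b ∈ s.image τ} :=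
        { toFun := fun a => ⟨τ a, Finset.mem_image_of_mem τ a.2⟩
          invFun := fun b => ⟨τ.symm b, by
            obtain ⟨a, ha, hab⟩ := Finset.mem_image.mp b.2
            rw [← hab, Equiv.symm_apply_apply]; exact ha⟩
          left_inv := fun a => Subtype.ext (Equiv.symm_apply_apply τ a)
          right_inv := fun b => Subtype.ext (Equiv.apply_symm_apply τ b) }
      let π0 : Perm {a // a ∈ s} := u.toEquiv.trans r.symm
      have hπ0 : ∀ (a : Fin n) (ha : a ∈ s), τ (π0 ⟨a, ha⟩ : Fin n) = (u ⟨a, ha⟩ : Fin n) := by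
        intro a ha
        show τ ((r.symm (u ⟨a, ha⟩)) : Fin n) = _
        exact Equiv.apply_symm_apply τ _
      refine ⟨⟨⟨τ * Equiv.Perm.ofSubtype π0, ?_, ?_⟩, π0⁻¹⟩, ?_⟩
      · intro a
        by_cases ha : a ∈ s
        · rw [Equiv.Perm.mul_apply, Equiv.Perm.ofSubtype_apply_of_mem π0 ha]
          have h1 := hτ (π0 ⟨a, ha⟩ : Fin n)
          have h2 := hcoh _ (π0 ⟨a, ha⟩).2 _ ha
          omega
        · rw [Equiv.Perm.mul_apply, Equiv.Perm.ofSubtype_apply_of_not_mem π0 ha]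
          exact hτ a
      · intro a ha b hb
        rw [Equiv.Perm.mul_apply, Equiv.Perm.mul_apply,
          Equiv.Perm.ofSubtype_apply_of_mem π0 ha, Equiv.Perm.ofSubtype_apply_of_mem π0 hb,
          hπ0 a ha, hπ0 b hb]
        rw [Subtype.coe_lt_coe, u.lt_iff_lt, Subtype.mk_lt_mk]
      · apply Subtype.ext
        show τ * Equiv.Perm.ofSubtype π0 * Equiv.Perm.ofSubtype π0⁻¹ = τ
        rw [map_inv, mul_inv_cancel_right]
  rw [← Nat.card_congr (Equiv.ofBijective Φ hbij), Nat.card_prod,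
    Nat.card_eq_fintype_card (α := Perm {a // a ∈ s}), Fintype.card_perm, Fintype.card_coe]



end Stmt11Aux

/-- The fall of `x`: letters `k` such that every letter greater than `k` has the same
position parity as `k`. -/

def fallSet {n : ℕ} (x : Equiv.Perm (Fin n)) : Set (Fin n) :=
  {k | ∀ v : Fin n, k < v → (x.symm v).val % 2 = (x.symm k).val % 2}

/-- if the fall of `x` has size `j`, then the number of permutations with
the same position parity of every letter as in `x` and with the fall letters in the same
relative order is `(⌊n/2⌋! · ⌈n/2⌉!) / j!`. -/
theorem stmt11 (n j : ℕ) (x : Equiv.Perm (Fin n)) (hj : (fallSet x).ncard = j) :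
    Nat.card {y : Equiv.Perm (Fin n) //
      (∀ v : Fin n, (y.symm v).val % 2 = (x.symm v).val % 2) ∧
      (∀ k ∈ fallSet x, ∀ m ∈ fallSet x, (y.symm k < y.symm m ↔ x.symm k < x.symm m))} =
    Nat.factorial (n / 2) * Nat.factorial ((n + 1) / 2) / Nat.factorial j := by
  classical
  have hcohF : ∀ a ∈ x.symm '' fallSet x, ∀ b ∈ x.symm '' fallSet x,
      a.val % 2 = b.val % 2 := by
    rintro a ⟨k, hk, rfl⟩ b ⟨m, hm, rfl⟩
    rcases lt_trichotomy k m with h | h | h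
    · exact (hk m h).symm
    · rw [h]
    · exact hm k h
  have hFfin : (x.symm '' fallSet x).Finite := Set.toFinite _
  set s : Finset (Fin n) := hFfin.toFinset with hs
  have hmem : ∀ a, a ∈ s ↔ a ∈ x.symm '' fallSet x := fun a => hFfin.mem_toFinset
  have hscard : s.card = j := by
    rw [hs, ← Set.ncard_eq_toFinset_card _ hFfin, ← hj]
    exact Set.ncard_image_of_injective (fallSet x) x.symm.injective
  let g : Equiv.Perm (Fin n) ≃ Equiv.Perm (Fin n) :=
    { toFun := fun y => x.trans y.symm
      invFun := fun τ => τ.symm.trans x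
      left_inv := fun y => by ext p; simp
      right_inv := fun τ => by ext p; simp }
  have hiff : ∀ y : Equiv.Perm (Fin n),
      ((∀ v : Fin n, (y.symm v).val % 2 = (x.symm v).val % 2) ∧
        (∀ k ∈ fallSet x, ∀ m ∈ fallSet x, (y.symm k < y.symm m ↔ x.symm k < x.symm m))) ↔
      ((∀ a : Fin n, ((g y) a).val % 2 = a.val % 2) ∧
        ∀ a ∈ s, ∀ b ∈ s, ((g y) a < (g y) b ↔ a < b)) := by
    intro y
    have hgy : ∀ a : Fin n, (g y) a = y.symm (x a) := fun a => rfl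
    constructor
    · rintro ⟨h1, h2⟩
      constructor
      · intro a
        rw [hgy]
        have := h1 (x a)
        rwa [Equiv.symm_apply_apply] at this
      · intro a ha b hb
        obtain ⟨k, hk, rfl⟩ := (hmem a).mp ha
        obtain ⟨m, hm, rfl⟩ := (hmem b).mp hb
        rw [hgy, hgy, Equiv.apply_symm_apply, Equiv.apply_symm_apply]
        exact h2 k hk m hm
    · rintro ⟨h1, h2⟩
      constructor
      · intro v
        have := h1 (x.symm v)
        rwa [hgy, Equiv.apply_symm_apply] at this
      · intro k hk m hm
        have := h2 _ ((hmem _).mpr ⟨k, hk, rfl⟩) _ ((hmem _).mpr ⟨m, hm, rfl⟩)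
        rwa [hgy, hgy, Equiv.apply_symm_apply, Equiv.apply_symm_apply] at this
  rw [Nat.card_congr (Equiv.subtypeEquiv
    (q := fun τ => (∀ a : Fin n, (τ a).val % 2 = a.val % 2) ∧
      ∀ a ∈ s, ∀ b ∈ s, (τ a < τ b ↔ a < b)) g hiff)]
  have hk := key s (fun a ha b hb => hcohF a ((hmem a).mp ha) b ((hmem b).mp hb))
  rw [card_parity_perm, hscard] at hk
  rw [mul_comm (Nat.factorial (n / 2))]
  exact (Nat.div_eq_of_eq_mul_left (Nat.factorial_pos j) hk.symm).symm
end

section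
/- Under the equivalence on S_n generated by transformations 123 ↔ 231 and 213 ↔ 132 on factors of three adjacent letters, a permutation w that begins with n(n-1)(n-2)...(n-k+1) for some k ≥ 0 is equivalent only to permutations that also begin with n(n-1)(n-2)...(n-k+1); in particular, the length of the longest initial decreasing run of consecutive values starting with n is invariant. -/
lemma step3_symm' {n : ℕ} {parts : Set (Set Pat)} {w w' : Equiv.Perm (Fin n)}
    (h : Step3 parts w w') : Step3 parts w' w := by
  obtain ⟨Q, hQ, i, hi, heq, hp, hq⟩ := h
  exact ⟨Q, hQ, i, hi, fun j hj => (heq j hj).symm, hq, hp⟩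

lemma step_pres' (n k : ℕ) (hk : k ≤ n) (w w' : Equiv.Perm (Fin n))
    (hw : ∀ j : ℕ, ∀ hj : j < k, (w ⟨j, Nat.lt_of_lt_of_le hj hk⟩).val = n - 1 - j)
    (h : Step3 {({p123, p231} : Set Pat), ({p213, p132} : Set Pat)} w w') :
    ∀ j : ℕ, ∀ hj : j < k, (w' ⟨j, Nat.lt_of_lt_of_le hj hk⟩).val = n - 1 - j := by
  obtain ⟨Q, hQ, i, hi, heq, ⟨p, hp, hpat⟩, -⟩ := h
  have hsmall : ∀ m : ℕ, ∀ hm : m < n, k ≤ m → (w ⟨m, hm⟩).val < n - k := by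
    intro m hm hkm
    by_contra hc
    push_neg at hc
    have hlt : (w ⟨m, hm⟩).val < n := (w ⟨m, hm⟩).isLt
    set v := (w ⟨m, hm⟩).val with hv
    have hjk : n - 1 - v < k := by omega
    have h1 : (w ⟨n - 1 - v, by omega⟩).val = n - 1 - (n - 1 - v) := hw _ hjk
    have h2 : (w ⟨n - 1 - v, by omega⟩).val = v := by omega
    have h3 : w ⟨n - 1 - v, by omega⟩ = w ⟨m, hm⟩ := Fin.ext h2
    have h4 := w.injective h3
    have : n - 1 - v = m := congrArg Fin.val h4
    omega
  by_cases hik : k ≤ i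
  · intro j hj
    rw [← heq ⟨j, by omega⟩ (Or.inl (by simpa using lt_of_lt_of_le hj hik))]
    exact hw j hj
  · exfalso
    push_neg at hik
    -- first letter of the window is the largest
    have ha : (w ⟨i, by omega⟩).val = n - 1 - i := hw i hik
    have hb : (w ⟨i + 1, by omega⟩).val < n - 1 - i := by
      by_cases h1 : i + 1 < k
      · have := hw (i + 1) h1; omega
      · have := hsmall (i + 1) (by omega) (by omega); omega
    have hc : (w ⟨i + 2, by omega⟩).val < n - 1 - i := by
      by_cases h1 : i + 2 < k
      · have := hw (i + 2) h1; omega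
      · have := hsmall (i + 2) (by omega) (by omega); omega
    -- all patterns in the parts require the first letter not to be the largest
    have hfirst : p (w ⟨i, by omega⟩).val (w ⟨i + 1, by omega⟩).val
        (w ⟨i + 2, by omega⟩).val := hpat
    rcases hQ with hQ | hQ
    · subst hQ
      rw [Set.mem_insert_iff, Set.mem_singleton_iff] at hp
      rcases hp with hp | hp <;> subst hp <;>
        simp only [p123, p231] at hfirst <;> omega
    · simp only [Set.mem_singleton_iff] at hQ
      subst hQ
      rw [Set.mem_insert_iff, Set.mem_singleton_iff] at hp
      rcases hp with hp | hp <;> subst hp <;>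
        simp only [p213, p132] at hfirst <;> omega

/-- under the `{123, 231}{213, 132}`-equivalence, a permutation beginning
with `n (n-1) … (n-k+1)` is only equivalent to permutations beginning with the same
decreasing run. -/
theorem stmt12 (n k : ℕ) (hk : k ≤ n) (w w' : Equiv.Perm (Fin n))
    (hw : ∀ j : ℕ, ∀ hj : j < k, (w ⟨j, by omega⟩).val = n - 1 - j)
    (h : PattEquiv {({p123, p231} : Set Pat), ({p213, p132} : Set Pat)} w w') :
    ∀ j : ℕ, ∀ hj : j < k, (w' ⟨j, by omega⟩).val = n - 1 - j := by
  have key : ∀ u v : Equiv.Perm (Fin n),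
      PattEquiv {({p123, p231} : Set Pat), ({p213, p132} : Set Pat)} u v →
      ((∀ j : ℕ, ∀ hj : j < k, (u ⟨j, by omega⟩).val = n - 1 - j) ↔
       (∀ j : ℕ, ∀ hj : j < k, (v ⟨j, by omega⟩).val = n - 1 - j)) := by
    intro u v huv
    induction huv with
    | rel a b hab =>
        exact ⟨fun h => step_pres' n k hk a b h hab,
               fun h => step_pres' n k hk b a h (step3_symm' hab)⟩
    | refl a => exact Iff.rfl
    | symm a b _ ih => exact ih.symm
    | trans a b c _ _ ih1 ih2 => exact ih1.trans ih2
  exact (key w w' h).mp hw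
end

section
/- Let P be a set partition of S_c and let P' be the partition of S_{c+1} into the equivalence classes of the P-equivalence on S_{c+1}. Then for every n ≥ c+1, the P-equivalence on S_n and the P'-equivalence on S_n coincide. -/
/-- The factor of `w` at positions `i, …, i+k-1` has order pattern (standardization) `σ`. -/
def PatternAt {n k : ℕ} (w : Equiv.Perm (Fin n)) (i : ℕ) (h : i + k ≤ n)
    (σ : Equiv.Perm (Fin k)) : Prop :=
  ∀ a b : Fin k, σ a < σ b ↔
    w ⟨i + a.val, by have := a.isLt; omega⟩ < w ⟨i + b.val, by have := b.isLt; omega⟩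

/-- One replacement move for a replacement partition `P` of `S_k`: a factor of `k`
adjacent letters whose pattern lies in some part `Q` of `P` is rearranged (same letters,
all other positions unchanged) into a factor whose pattern also lies in `Q`. -/
def StepK {k n : ℕ} (P : Set (Set (Equiv.Perm (Fin k)))) (w w' : Equiv.Perm (Fin n)) : Prop :=
  ∃ Q ∈ P, ∃ i : ℕ, ∃ h : i + k ≤ n,
    (∀ j : Fin n, (j.val < i ∨ i + k ≤ j.val) → w j = w' j) ∧
    (∃ σ ∈ Q, PatternAt w i h σ) ∧ (∃ τ ∈ Q, PatternAt w' i h τ)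

namespace Stmt13

open Equiv

/-- The image of the window `[i, i+k)` under `w`, as a finset. -/
def winImg {n : ℕ} (w : Equiv.Perm (Fin n)) (i k : ℕ) (h : i + k ≤ n) : Finset (Fin n) :=
  Finset.univ.image (fun a : Fin k => w ⟨i + a.val, by have := a.isLt; omega⟩)

lemma win_inj {n : ℕ} (w : Equiv.Perm (Fin n)) (i k : ℕ) (h : i + k ≤ n) :
    Function.Injective (fun a : Fin k => w ⟨i + a.val, by have := a.isLt; omega⟩) := by
  intro a b hab
  have := w.injective hab
  have := Fin.mk.injEq (i + a.val) _ (i + b.val) _ ▸ this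
  exact Fin.ext (by omega)

lemma winImg_card {n : ℕ} (w : Equiv.Perm (Fin n)) (i k : ℕ) (h : i + k ≤ n) :
    (winImg w i k h).card = k := by
  rw [winImg, Finset.card_image_of_injective _ (win_inj w i k h), Finset.card_univ,
    Fintype.card_fin]

/-- The standardization (order pattern) of the window `[i, i+k)` of `w`. -/
noncomputable def patOf {n : ℕ} (w : Equiv.Perm (Fin n)) (i k : ℕ) (h : i + k ≤ n) :
    Equiv.Perm (Fin k) :=
  Equiv.ofBijective
    (fun a : Fin k => ((winImg w i k h).orderIsoOfFin (winImg_card w i k h)).symm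
      ⟨w ⟨i + a.val, by have := a.isLt; omega⟩, by
        apply Finset.mem_image.2; exact ⟨a, Finset.mem_univ a, rfl⟩⟩)
    (by
      apply Finite.injective_iff_bijective.1
      intro a b hab
      have := congrArg Subtype.val (((winImg w i k h).orderIsoOfFin
        (winImg_card w i k h)).symm.injective hab)
      exact win_inj w i k h this)

lemma patternAt_patOf {n : ℕ} (w : Equiv.Perm (Fin n)) (i k : ℕ) (h : i + k ≤ n) :
    PatternAt w i h (patOf w i k h) := by
  intro a b
  simp only [patOf, Equiv.ofBijective_apply, OrderIso.lt_iff_lt, Subtype.mk_lt_mk]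
  exact Iff.rfl

lemma orderIso_symm_congr {α : Type*} [LinearOrder α] {k : ℕ} {s s' : Finset α}
    (hss : s = s') {hc : s.card = k} {hc' : s'.card = k} {x x' : α} (hxx : x = x')
    (hx : x ∈ s) (hx' : x' ∈ s') :
    (s.orderIsoOfFin hc).symm ⟨x, hx⟩ = (s'.orderIsoOfFin hc').symm ⟨x', hx'⟩ := by
  subst hss; subst hxx; rfl

lemma patOf_congr {n k : ℕ} {w w' : Equiv.Perm (Fin n)} {i : ℕ} {h : i + k ≤ n}
    (hwin : winImg w i k h = winImg w' i k h) {a : Fin k}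
    (hval : w ⟨i + a.val, by have := a.isLt; omega⟩ = w' ⟨i + a.val, by have := a.isLt; omega⟩) :
    patOf w i k h a = patOf w' i k h a := by
  simp only [patOf, Equiv.ofBijective_apply]
  exact orderIso_symm_congr hwin hval _ _

/-- agreement outside the window implies the window images coincide. -/
lemma range_window_eq {n k : ℕ} (w w' : Equiv.Perm (Fin n)) (i : ℕ) (h : i + k ≤ n)
    (hagree : ∀ j : Fin n, (j.val < i ∨ i + k ≤ j.val) → w j = w' j) :
    Set.range (fun a : Fin k => w ⟨i + a.val, by have := a.isLt; omega⟩) =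
    Set.range (fun a : Fin k => w' ⟨i + a.val, by have := a.isLt; omega⟩) := by
  have key : ∀ x : Fin n, ((w.symm x).val < i ∨ i + k ≤ (w.symm x).val) ↔
      ((w'.symm x).val < i ∨ i + k ≤ (w'.symm x).val) := by
    intro x
    constructor
    · intro ho
      have h1 : w' (w.symm x) = x := by rw [← hagree _ ho]; simp
      have : w'.symm x = w.symm x := w'.symm_apply_eq.2 h1.symm
      rw [this]; exact ho
    · intro ho
      have h1 : w (w'.symm x) = x := by rw [hagree _ ho]; simp
      have : w.symm x = w'.symm x := w.symm_apply_eq.2 h1.symm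
      rw [this]; exact ho
  have mem_iff : ∀ (u : Equiv.Perm (Fin n)) (x : Fin n),
      (x ∈ Set.range (fun a : Fin k => u ⟨i + a.val, by have := a.isLt; omega⟩)) ↔
      ¬ ((u.symm x).val < i ∨ i + k ≤ (u.symm x).val) := by
    intro u x
    constructor
    · rintro ⟨a, rfl⟩
      simp only [Equiv.symm_apply_apply]
      have := a.isLt; omega
    · intro hx
      push_neg at hx
      refine ⟨⟨(u.symm x).val - i, by omega⟩, ?_⟩
      have : (⟨i + ((u.symm x).val - i), by omega⟩ : Fin n) = u.symm x :=
        Fin.ext (by simp only [Fin.val_mk]; omega)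
      simp only [this, Equiv.apply_symm_apply]
  ext x
  rw [mem_iff w x, mem_iff w' x, key x]

lemma patternAt_shift {n k K : ℕ} {w : Equiv.Perm (Fin n)} {u : Equiv.Perm (Fin K)} {i j : ℕ}
    (h : i + K ≤ n) (hu : PatternAt w i h u) (hj : j + k ≤ K) (σ : Equiv.Perm (Fin k))
    (h2 : i + j + k ≤ n) :
    PatternAt u j hj σ ↔ PatternAt w (i + j) h2 σ := by
  have key : ∀ a b : Fin k,
      (u ⟨j + a.val, by have := a.isLt; omega⟩ < u ⟨j + b.val, by have := b.isLt; omega⟩) ↔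
      (w ⟨i + j + a.val, by have := a.isLt; omega⟩ <
        w ⟨i + j + b.val, by have := b.isLt; omega⟩) := by
    intro a b
    have := hu ⟨j + a.val, by omega⟩ ⟨j + b.val, by omega⟩
    simp only at this
    convert this using 2 <;> exact congrArg w (Fin.ext (by simp only [Fin.val_mk]; omega))
  constructor
  · intro H a b; rw [H a b]; exact key a b
  · intro H a b; rw [H a b]; exact (key a b).symm

lemma eq_of_patternAt_eq {n k : ℕ} {w w' : Equiv.Perm (Fin n)} {i : ℕ} (h : i + k ≤ n)
    {v : Equiv.Perm (Fin k)} (hw : PatternAt w i h v) (hw' : PatternAt w' i h v)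
    (hagree : ∀ j : Fin n, (j.val < i ∨ i + k ≤ j.val) → w j = w' j)
    (hrange : Set.range (fun a : Fin k => w ⟨i + a.val, by have := a.isLt; omega⟩) =
      Set.range (fun a : Fin k => w' ⟨i + a.val, by have := a.isLt; omega⟩)) :
    w = w' := by
  set f : Fin k → Fin n := fun a => w ⟨i + (v.symm a).val, by have := (v.symm a).isLt; omega⟩
    with hf_def
  set g : Fin k → Fin n := fun a => w' ⟨i + (v.symm a).val, by have := (v.symm a).isLt; omega⟩
    with hg_def
  have hf : StrictMono f := by
    intro a b hab
    exact (hw (v.symm a) (v.symm b)).1 (by simpa using hab)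
  have hg : StrictMono g := by
    intro a b hab
    exact (hw' (v.symm a) (v.symm b)).1 (by simpa using hab)
  have hrf : Set.range f =
      Set.range (fun a : Fin k => w ⟨i + a.val, by have := a.isLt; omega⟩) := by
    ext x; constructor
    · rintro ⟨a, rfl⟩; exact ⟨v.symm a, rfl⟩
    · rintro ⟨b, rfl⟩; exact ⟨v b, by simp [hf_def]⟩
  have hrg : Set.range g =
      Set.range (fun a : Fin k => w' ⟨i + a.val, by have := a.isLt; omega⟩) := by
    ext x; constructor
    · rintro ⟨a, rfl⟩; exact ⟨v.symm a, rfl⟩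
    · rintro ⟨b, rfl⟩; exact ⟨v b, by simp [hg_def]⟩
  have hr : Set.range f = Set.range g := by rw [hrf, hrg, hrange]
  haveI : WellFoundedLT (Fin k) := inferInstance
  have hfg : f = g := (hf.range_inj hg).1 hr
  apply Equiv.ext
  intro x
  by_cases hx : x.val < i ∨ i + k ≤ x.val
  · exact hagree x hx
  · push_neg at hx
    have hb : x = ⟨i + ((⟨x.val - i, by omega⟩ : Fin k) : ℕ), by omega⟩ :=
      Fin.ext (by simp only [Fin.val_mk]; omega)
    set b : Fin k := ⟨x.val - i, by omega⟩
    have h1 : w x = f (v b) := by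
      rw [hf_def]; simp only [Equiv.symm_apply_apply]; exact congrArg w hb
    have h2 : w' x = g (v b) := by
      rw [hg_def]; simp only [Equiv.symm_apply_apply]; exact congrArg w' hb
    rw [h1, h2, hfg]

/-- the window `[i, i+K)` of `Fin n` as a subtype equiv -/
def winEquiv (i K n : ℕ) (h : i + K ≤ n) :
    Fin K ≃ {x : Fin n // i ≤ x.val ∧ x.val < i + K} where
  toFun a := ⟨⟨i + a.val, by have := a.isLt; omega⟩,
    by simp only [Fin.val_mk]; have := a.isLt; omega⟩
  invFun x := ⟨x.val.val - i, by have := x.prop; omega⟩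
  left_inv a := by apply Fin.ext; simp
  right_inv x := by apply Subtype.ext; apply Fin.ext; have := x.prop; simp; omega

lemma step_transport {n c K : ℕ} {P : Set (Set (Equiv.Perm (Fin c)))}
    {u v : Equiv.Perm (Fin K)} (hstep : StepK P u v)
    (w : Equiv.Perm (Fin n)) (i : ℕ) (h : i + K ≤ n) (hu : PatternAt w i h u) :
    ∃ w', StepK P w w' ∧ PatternAt w' i h v ∧
      ∀ j : Fin n, (j.val < i ∨ i + K ≤ j.val) → w j = w' j := by
  classical
  obtain ⟨Q, hQ, j, hj, hagreeuv, ⟨σ, hσQ, hσ⟩, ⟨τ, hτQ, hτ⟩⟩ := hstep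
  set e := winEquiv i K n h with he
  set ρ : Equiv.Perm (Fin K) := v.trans u.symm with hρ
  set π : Equiv.Perm (Fin n) := ρ.extendDomain e with hπ
  refine ⟨w * π, ?_, ?_, ?_⟩
  rotate_left
  · -- PatternAt (w * π) i h v
    intro a b
    have hπa : ∀ a : Fin K, π (⟨i + a.val, by have := a.isLt; omega⟩ : Fin n) =
        ⟨i + (ρ a).val, by have := (ρ a).isLt; omega⟩ := by
      intro a
      exact Equiv.Perm.extendDomain_apply_image ρ e a
    have key := hu (u.symm (v a)) (u.symm (v b))
    simp only [Equiv.apply_symm_apply] at key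
    rw [key]
    simp only [Equiv.Perm.mul_apply, hπa]
    rfl
  · -- agreement outside [i, i+K)
    intro x hx
    have : π x = x := Equiv.Perm.extendDomain_apply_not_subtype ρ e (by simp; omega)
    simp [Equiv.Perm.mul_apply, this]
  · -- StepK P w (w * π)
    refine ⟨Q, hQ, i + j, by omega, ?_, ⟨σ, hσQ, ?_⟩, ⟨τ, hτQ, ?_⟩⟩
    · -- agreement outside [i+j, i+j+c)
      intro x hx
      by_cases hin : i ≤ x.val ∧ x.val < i + K
      · set a : Fin K := ⟨x.val - i, by omega⟩ with ha
        have hxa : x = (⟨i + a.val, by omega⟩ : Fin n) := Fin.ext (by simp [ha]; omega)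
        have hρa : ρ a = a := by
          have : u a = v a := hagreeuv a (by simp [ha]; omega)
          simp [hρ, ← this]
        have hπx : π x = x := by
          rw [hxa]
          have := Equiv.Perm.extendDomain_apply_image ρ e a
          rw [hρa] at this
          exact this
        simp [Equiv.Perm.mul_apply, hπx]
      · have : π x = x := Equiv.Perm.extendDomain_apply_not_subtype ρ e (by simpa using hin)
        simp [Equiv.Perm.mul_apply, this]
    · exact (patternAt_shift h hu hj σ (by omega)).1 hσ
    · have hv' : PatternAt (w * π) i h v := by
        intro a b
        have hπa : ∀ a : Fin K, π (⟨i + a.val, by have := a.isLt; omega⟩ : Fin n) =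
            ⟨i + (ρ a).val, by have := (ρ a).isLt; omega⟩ := by
          intro a
          exact Equiv.Perm.extendDomain_apply_image ρ e a
        have key := hu (u.symm (v a)) (u.symm (v b))
        simp only [Equiv.apply_symm_apply] at key
        rw [key]
        simp only [Equiv.Perm.mul_apply, hπa]
        rfl
      exact (patternAt_shift h hv' hj τ (by omega)).1 hτ

lemma stepK_symm {n c : ℕ} {P : Set (Set (Equiv.Perm (Fin c)))}
    {w w' : Equiv.Perm (Fin n)} (h : StepK P w w') : StepK P w' w := by
  obtain ⟨Q, hQ, i, hi, hagree, hσ, hτ⟩ := h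
  exact ⟨Q, hQ, i, hi, fun j hj => (hagree j hj).symm, hτ, hσ⟩

def Transports {n c K : ℕ} (P : Set (Set (Equiv.Perm (Fin c))))
    (u v : Equiv.Perm (Fin K)) : Prop :=
  ∀ (w : Equiv.Perm (Fin n)) (i : ℕ) (h : i + K ≤ n), PatternAt w i h u →
    ∃ w', Relation.EqvGen (StepK P) w w' ∧ PatternAt w' i h v ∧
      ∀ j : Fin n, (j.val < i ∨ i + K ≤ j.val) → w j = w' j

lemma eqvgen_transport {n c K : ℕ} {P : Set (Set (Equiv.Perm (Fin c)))}
    {u v : Equiv.Perm (Fin K)}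
    (hrel : Relation.EqvGen (StepK P) u v) : Transports (n := n) P u v := by
  suffices H : ∀ u v : Equiv.Perm (Fin K), Relation.EqvGen (StepK P) u v →
      Transports (n := n) P u v ∧ Transports (n := n) P v u from
    (H u v hrel).1
  intro u v hrel
  induction hrel with
  | rel a b hab =>
    constructor
    · intro w i h hw
      obtain ⟨w', h1, h2, h3⟩ := step_transport hab w i h hw
      exact ⟨w', Relation.EqvGen.rel _ _ h1, h2, h3⟩
    · intro w i h hw
      obtain ⟨w', h1, h2, h3⟩ := step_transport (stepK_symm hab) w i h hw
      exact ⟨w', Relation.EqvGen.rel _ _ h1, h2, h3⟩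
  | refl a =>
    exact ⟨fun w i h hw => ⟨w, Relation.EqvGen.refl w, hw, fun _ _ => rfl⟩,
      fun w i h hw => ⟨w, Relation.EqvGen.refl w, hw, fun _ _ => rfl⟩⟩
  | symm a b _ ih => exact ⟨ih.2, ih.1⟩
  | trans a b d _ _ ih1 ih2 =>
    constructor
    · intro w i h hw
      obtain ⟨w1, h1, h2, h3⟩ := ih1.1 w i h hw
      obtain ⟨w2, h4, h5, h6⟩ := ih2.1 w1 i h h2
      exact ⟨w2, Relation.EqvGen.trans _ _ _ h1 h4, h5,
        fun j hj => (h3 j hj).trans (h6 j hj)⟩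
    · intro w i h hw
      obtain ⟨w1, h1, h2, h3⟩ := ih2.2 w i h hw
      obtain ⟨w2, h4, h5, h6⟩ := ih1.2 w1 i h h2
      exact ⟨w2, Relation.EqvGen.trans _ _ _ h1 h4, h5,
        fun j hj => (h3 j hj).trans (h6 j hj)⟩

lemma dir2_step {n c : ℕ} {P : Set (Set (Equiv.Perm (Fin c)))}
    {P' : Set (Set (Equiv.Perm (Fin (c + 1))))}
    (hP' : P' = {C | ∃ w : Equiv.Perm (Fin (c + 1)),
      C = {v | Relation.EqvGen (StepK P) w v}})
    {w w' : Equiv.Perm (Fin n)} (hstep : StepK P' w w') :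
    Relation.EqvGen (StepK P) w w' := by
  obtain ⟨Q', hQ', i, hi, hagree, ⟨u, huQ, hu⟩, ⟨v, hvQ, hv⟩⟩ := hstep
  rw [hP'] at hQ'
  obtain ⟨w₀, rfl⟩ := hQ'
  have huQ' : Relation.EqvGen (StepK P) w₀ u := huQ
  have hvQ' : Relation.EqvGen (StepK P) w₀ v := hvQ
  have huv : Relation.EqvGen (StepK P) u v :=
    Relation.EqvGen.trans _ _ _ (Relation.EqvGen.symm _ _ huQ') hvQ'
  obtain ⟨w₁, h1, h2, h3⟩ := eqvgen_transport huv w i hi hu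
  have hagree₁ : ∀ x : Fin n, (x.val < i ∨ i + (c + 1) ≤ x.val) → w₁ x = w' x :=
    fun x hx => (h3 x hx).symm.trans (hagree x hx)
  have hrange := range_window_eq w₁ w' i hi hagree₁
  have heq : w₁ = w' := eq_of_patternAt_eq hi h2 hv hagree₁ hrange
  exact heq ▸ h1

lemma dir1_step {n c : ℕ} {P : Set (Set (Equiv.Perm (Fin c)))}
    {P' : Set (Set (Equiv.Perm (Fin (c + 1))))}
    (hP' : P' = {C | ∃ w : Equiv.Perm (Fin (c + 1)),
      C = {v | Relation.EqvGen (StepK P) w v}})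
    (hn : c + 1 ≤ n) {w w' : Equiv.Perm (Fin n)} (hstep : StepK P w w') :
    StepK P' w w' := by
  obtain ⟨Q, hQ, i, hi, hagree, ⟨σ, hσQ, hσ⟩, ⟨τ, hτQ, hτ⟩⟩ := hstep
  obtain ⟨i', j, hij, hj, h'⟩ : ∃ i' j, i = i' + j ∧ j + c ≤ c + 1 ∧ i' + (c + 1) ≤ n := by
    by_cases hc : i + c + 1 ≤ n
    · exact ⟨i, 0, by omega, by omega, by omega⟩
    · exact ⟨i - 1, 1, by omega, by omega, by omega⟩
  subst hij
  set u := patOf w i' (c + 1) h' with hu_def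
  set v := patOf w' i' (c + 1) h' with hv_def
  have hu : PatternAt w i' h' u := patternAt_patOf w i' (c + 1) h'
  have hv : PatternAt w' i' h' v := patternAt_patOf w' i' (c + 1) h'
  have hagree' : ∀ x : Fin n, (x.val < i' ∨ i' + (c + 1) ≤ x.val) → w x = w' x :=
    fun x hx => hagree x (by omega)
  have hwin : winImg w i' (c + 1) h' = winImg w' i' (c + 1) h' := by
    apply Finset.coe_injective
    simp only [winImg, Finset.coe_image, Finset.coe_univ, Set.image_univ]
    exact range_window_eq w w' i' h' hagree'
  have hstep' : StepK P u v := by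
    refine ⟨Q, hQ, j, by omega, ?_, ⟨σ, hσQ, ?_⟩, ⟨τ, hτQ, ?_⟩⟩
    · intro a ha
      exact patOf_congr hwin
        (hagree ⟨i' + a.val, by have := a.isLt; omega⟩ (by simp only [Fin.val_mk]; omega))
    · exact (patternAt_shift h' hu (by omega) σ (by omega)).2 hσ
    · exact (patternAt_shift h' hv (by omega) τ (by omega)).2 hτ
  refine ⟨{x | Relation.EqvGen (StepK P) u x}, ?_, i', h', hagree',
    ⟨u, Relation.EqvGen.refl u, hu⟩, ⟨v, Relation.EqvGen.rel u v hstep', hv⟩⟩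
  rw [hP']
  exact ⟨u, rfl⟩

end Stmt13

/-- if `P` is a set partition of `S_c` and `P'` is the partition of
`S_{c+1}` into equivalence classes of the `P`-equivalence, then for every `n ≥ c + 1`
the `P`-equivalence and the `P'`-equivalence on `S_n` coincide. -/
theorem stmt13 (c : ℕ) (P : Set (Set (Equiv.Perm (Fin c)))) (hP : Setoid.IsPartition P)
    (P' : Set (Set (Equiv.Perm (Fin (c + 1)))))
    (hP' : P' = {C | ∃ w : Equiv.Perm (Fin (c + 1)),
      C = {v | Relation.EqvGen (StepK P) w v}})
    (n : ℕ) (hn : c + 1 ≤ n) (w w' : Equiv.Perm (Fin n)) :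
    Relation.EqvGen (StepK P) w w' ↔ Relation.EqvGen (StepK P') w w' := by
  constructor
  · intro hww
    induction hww with
    | rel a b hab => exact Relation.EqvGen.rel _ _ (Stmt13.dir1_step hP' hn hab)
    | refl a => exact Relation.EqvGen.refl a
    | symm a b _ ih => exact Relation.EqvGen.symm _ _ ih
    | trans a b d _ _ ih1 ih2 => exact Relation.EqvGen.trans _ _ _ ih1 ih2
  · intro hww
    induction hww with
    | rel a b hab => exact Stmt13.dir2_step hP' hab
    | refl a => exact Relation.EqvGen.refl a
    | symm a b _ ih => exact Relation.EqvGen.symm _ _ ih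
    | trans a b d _ _ ih1 ih2 => exact Relation.EqvGen.trans _ _ _ ih1 ih2
end
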